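/- arXiv:1801.06938 — 7 statements merged into one kernel-verified Lean document; each statement's English description precedes it below -/
import Mathlib

section
/- (Proposition 4.1, one-mode example) Let x be a vector with ‖x‖_B = 1 and let E = xᵀAx/xᵀBx be its energy. Then min over real α of ‖αx − x₁‖_A (the angle between span{x} and span{x₁}) is bounded by √( λ₁λ₂(λ₁ − E) / ((λ₁ − λ₂)E) ). -/
open Matrix

private lemma dot_symm3 (M : Matrix (Fin 3) (Fin 3) ℝ) (hM : Mᵀ = M) (v w : Fin 3 → ℝ) :
    v ⬝ᵥ M *ᵥ w = w ⬝ᵥ M *ᵥ v := by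
  rw [dotProduct_mulVec, dotProduct_comm, ← mulVec_transpose, hM]

/-- Proposition 4.1 (one-mode example): for `x` with `‖x‖_B = 1` and energy
`E = xᵀAx / xᵀBx`, the minimum over `α` of `‖α x − x₁‖_A` is bounded by
`√(λ₁λ₂(λ₁ − E) / ((λ₁ − λ₂) E))`. -/
theorem stmt_2
    (A B : Matrix (Fin 3) (Fin 3) ℝ) (hA : A.PosDef) (hB : B.PosDef)
    (x1 x2 x3 : Fin 3 → ℝ) (l1 l2 l3 : ℝ)
    (heig1 : A *ᵥ x1 = l1 • (B *ᵥ x1))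
    (heig2 : A *ᵥ x2 = l2 • (B *ᵥ x2))
    (heig3 : A *ᵥ x3 = l3 • (B *ᵥ x3))
    (hB11 : x1 ⬝ᵥ B *ᵥ x1 = 1) (hB22 : x2 ⬝ᵥ B *ᵥ x2 = 1) (hB33 : x3 ⬝ᵥ B *ᵥ x3 = 1)
    (hB12 : x1 ⬝ᵥ B *ᵥ x2 = 0) (hB13 : x1 ⬝ᵥ B *ᵥ x3 = 0) (hB23 : x2 ⬝ᵥ B *ᵥ x3 = 0)
    (hA11 : x1 ⬝ᵥ A *ᵥ x1 = l1) (hA22 : x2 ⬝ᵥ A *ᵥ x2 = l2) (hA33 : x3 ⬝ᵥ A *ᵥ x3 = l3)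
    (hA12 : x1 ⬝ᵥ A *ᵥ x2 = 0) (hA13 : x1 ⬝ᵥ A *ᵥ x3 = 0) (hA23 : x2 ⬝ᵥ A *ᵥ x3 = 0)
    (hord1 : l2 < l1) (hord2 : l3 < l2) (hord3 : 0 < l3)
    (x : Fin 3 → ℝ) (hxB : x ⬝ᵥ B *ᵥ x = 1)
    (E : ℝ) (hE : E = (x ⬝ᵥ A *ᵥ x) / (x ⬝ᵥ B *ᵥ x)) :
    sInf {r : ℝ | ∃ α : ℝ, r = Real.sqrt ((α • x - x1) ⬝ᵥ A *ᵥ (α • x - x1))}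
      ≤ Real.sqrt (l1 * l2 * (l1 - E) / ((l1 - l2) * E)) := by
  have hAs : Aᵀ = A := hA.1.eq
  have hBs : Bᵀ = B := hB.1.eq
  have hB21 : x2 ⬝ᵥ B *ᵥ x1 = 0 := by rw [dot_symm3 B hBs]; exact hB12
  have hB31 : x3 ⬝ᵥ B *ᵥ x1 = 0 := by rw [dot_symm3 B hBs]; exact hB13
  have hB32 : x3 ⬝ᵥ B *ᵥ x2 = 0 := by rw [dot_symm3 B hBs]; exact hB23
  set c1 := x ⬝ᵥ B *ᵥ x1 with hc1
  set c2 := x ⬝ᵥ B *ᵥ x2 with hc2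
  set c3 := x ⬝ᵥ B *ᵥ x3 with hc3
  -- span is everything
  have hli : LinearIndependent ℝ ![x1, x2, x3] := by
    rw [Fintype.linearIndependent_iff]
    intro g hg
    rw [Fin.sum_univ_three] at hg
    simp only [Matrix.cons_val_zero, Matrix.cons_val_one, Matrix.head_cons,
      Matrix.cons_val_two, Matrix.tail_cons] at hg
    have e1 : x1 ⬝ᵥ B *ᵥ (g 0 • x1 + g 1 • x2 + g 2 • x3) = g 0 := by
      simp [mulVec_add, mulVec_smul, dotProduct_add, dotProduct_smul, hB11, hB12, hB13]
    have e2 : x2 ⬝ᵥ B *ᵥ (g 0 • x1 + g 1 • x2 + g 2 • x3) = g 1 := by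
      simp [mulVec_add, mulVec_smul, dotProduct_add, dotProduct_smul, hB21, hB22, hB23]
    have e3 : x3 ⬝ᵥ B *ᵥ (g 0 • x1 + g 1 • x2 + g 2 • x3) = g 2 := by
      simp [mulVec_add, mulVec_smul, dotProduct_add, dotProduct_smul, hB31, hB32, hB33]
    rw [hg] at e1 e2 e3
    simp only [mulVec_zero, dotProduct_zero] at e1 e2 e3
    intro i
    fin_cases i
    exacts [e1.symm, e2.symm, e3.symm]
  have hspan : Submodule.span ℝ ({x1, x2, x3} : Set (Fin 3 → ℝ)) = ⊤ := by
    have := hli.span_eq_top_of_card_eq_finrank (by simp)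
    rw [show Set.range ![x1, x2, x3] = {x1, x2, x3} by
      ext v; simp [Fin.exists_fin_succ, Fin.exists_fin_two, eq_comm]; tauto] at this
    exact this
  -- decompose x
  have hs1 : x1 ⬝ᵥ B *ᵥ x = c1 := dot_symm3 B hBs x1 x
  have hs2 : x2 ⬝ᵥ B *ᵥ x = c2 := dot_symm3 B hBs x2 x
  have hs3 : x3 ⬝ᵥ B *ᵥ x = c3 := dot_symm3 B hBs x3 x
  set z : Fin 3 → ℝ := x - (c1 • x1 + c2 • x2 + c3 • x3) with hzdef
  have hz1 : z ⬝ᵥ B *ᵥ x1 = 0 := by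
    rw [dot_symm3 B hBs, hzdef]
    simp only [mulVec_sub, mulVec_add, mulVec_smul, dotProduct_sub, dotProduct_add,
      dotProduct_smul, smul_eq_mul, hs1, hB11, hB12, hB13]
    ring
  have hz2 : z ⬝ᵥ B *ᵥ x2 = 0 := by
    rw [dot_symm3 B hBs, hzdef]
    simp only [mulVec_sub, mulVec_add, mulVec_smul, dotProduct_sub, dotProduct_add,
      dotProduct_smul, smul_eq_mul, hs2, hB21, hB22, hB23]
    ring
  have hz3 : z ⬝ᵥ B *ᵥ x3 = 0 := by
    rw [dot_symm3 B hBs, hzdef]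
    simp only [mulVec_sub, mulVec_add, mulVec_smul, dotProduct_sub, dotProduct_add,
      dotProduct_smul, smul_eq_mul, hs3, hB31, hB32, hB33]
    ring
  have hzorth : ∀ w : Fin 3 → ℝ, z ⬝ᵥ B *ᵥ w = 0 := by
    intro w
    have hw : w ∈ Submodule.span ℝ ({x1, x2, x3} : Set (Fin 3 → ℝ)) := by
      rw [hspan]; trivial
    induction hw using Submodule.span_induction with
    | mem v hv =>
      rcases hv with rfl | rfl | rfl
      exacts [hz1, hz2, hz3]
    | zero => simp
    | add v w _ _ hv hw => rw [mulVec_add, dotProduct_add, hv, hw, add_zero]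
    | smul a v _ hv => rw [mulVec_smul, dotProduct_smul, hv, smul_zero]
  have hz0 : z = 0 := by
    by_contra h
    have := hB.dotProduct_mulVec_pos h
    simp only [star_trivial, hzorth z] at this
    exact lt_irrefl 0 this
  have hx : x = c1 • x1 + c2 • x2 + c3 • x3 := sub_eq_zero.mp hz0
  -- symmetric A dots
  have hA21 : x2 ⬝ᵥ A *ᵥ x1 = 0 := by rw [dot_symm3 A hAs]; exact hA12
  have hA31 : x3 ⬝ᵥ A *ᵥ x1 = 0 := by rw [dot_symm3 A hAs]; exact hA13
  have hA32 : x3 ⬝ᵥ A *ᵥ x2 = 0 := by rw [dot_symm3 A hAs]; exact hA23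
  have hsum : c1 ^ 2 + c2 ^ 2 + c3 ^ 2 = 1 := by
    have : x ⬝ᵥ B *ᵥ x = c1 ^ 2 + c2 ^ 2 + c3 ^ 2 := by
      nth_rewrite 1 [hx]; nth_rewrite 1 [hx]
      simp [mulVec_add, mulVec_smul, dotProduct_add, dotProduct_smul, add_dotProduct,
        smul_dotProduct, hB11, hB22, hB33, hB12, hB13, hB23, hB21, hB31, hB32, smul_eq_mul]
      ring
    linarith [hxB, this]
  have hxAx : x ⬝ᵥ A *ᵥ x = c1 ^ 2 * l1 + c2 ^ 2 * l2 + c3 ^ 2 * l3 := by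
    nth_rewrite 1 [hx]; nth_rewrite 1 [hx]
    simp [mulVec_add, mulVec_smul, dotProduct_add, dotProduct_smul, add_dotProduct,
      smul_dotProduct, hA11, hA22, hA33, hA12, hA13, hA23, hA21, hA31, hA32, smul_eq_mul]
    ring
  have hE' : E = c1 ^ 2 * l1 + c2 ^ 2 * l2 + c3 ^ 2 * l3 := by
    rw [hE, hxB, hxAx, div_one]
  have hxAx1 : x ⬝ᵥ A *ᵥ x1 = l1 * c1 := by
    rw [heig1, dotProduct_smul, smul_eq_mul, ← hc1]
  have hx1Ax : x1 ⬝ᵥ A *ᵥ x = l1 * c1 := by rw [dot_symm3 A hAs]; exact hxAx1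
  clear hzorth hz0 hz1 hz2 hz3 hzdef hx hspan hli hs1 hs2 hs3 hc1 hc2 hc3 hxAx
  clear_value c1 c2 c3
  clear z
  have hEpos : 0 < E := by nlinarith [sq_nonneg c1, sq_nonneg c2, sq_nonneg c3]
  -- the chosen α
  set α : ℝ := c1 * l1 / E with hα
  have hVal : (α • x - x1) ⬝ᵥ A *ᵥ (α • x - x1)
      = α ^ 2 * (x ⬝ᵥ A *ᵥ x) - 2 * α * (l1 * c1) + l1 := by
    simp [mulVec_sub, mulVec_smul, dotProduct_sub, dotProduct_smul, sub_dotProduct,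
      smul_dotProduct, smul_eq_mul, hxAx1, hx1Ax, hA11]
    ring
  -- inf ≤ value at α
  have hmem : Real.sqrt ((α • x - x1) ⬝ᵥ A *ᵥ (α • x - x1))
      ∈ {r : ℝ | ∃ β : ℝ, r = Real.sqrt ((β • x - x1) ⬝ᵥ A *ᵥ (β • x - x1))} := ⟨α, rfl⟩
  have hbdd : BddBelow {r : ℝ | ∃ β : ℝ, r = Real.sqrt ((β • x - x1) ⬝ᵥ A *ᵥ (β • x - x1))} := by
    refine ⟨0, fun r hr => ?_⟩
    obtain ⟨β, rfl⟩ := hr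
    exact Real.sqrt_nonneg _
  refine le_trans (csInf_le hbdd hmem) (Real.sqrt_le_sqrt ?_)
  have hxAxE : x ⬝ᵥ A *ᵥ x = E := by rw [hE, hxB, div_one]
  rw [hVal, hxAxE]
  have hLHS : α ^ 2 * E - 2 * α * (l1 * c1) + l1 = (l1 * E - c1 ^ 2 * l1 ^ 2) / E := by
    rw [hα]
    field_simp
    ring
  have hden : (0:ℝ) < (l1 - l2) * E := by
    have : (0:ℝ) < l1 - l2 := by linarith
    positivity
  rw [hLHS, div_le_div_iff₀ hEpos hden]
  have h1 : E - l2 - c1 ^ 2 * (l1 - l2) = c3 ^ 2 * (l3 - l2) := by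
    linear_combination hE' + l2 * hsum
  clear_value α
  clear hVal hmem hbdd hLHS hα hxAxE hxAx1 hx1Ax hE hxB hA hB heig1 heig2 heig3
  clear hB11 hB22 hB33 hB12 hB13 hB23 hA11 hA22 hA33 hA12 hA13 hA23
  clear hB21 hB31 hB32 hA21 hA31 hA32 hAs hBs
  have h2 : E - l2 ≤ c1 ^ 2 * (l1 - l2) := by
    nlinarith [h1, mul_nonneg (sq_nonneg c3) (by linarith : (0:ℝ) ≤ l2 - l3)]
  have h3 : 0 ≤ E * l1 ^ 2 * (c1 ^ 2 * (l1 - l2) - (E - l2)) :=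
    mul_nonneg (mul_nonneg hEpos.le (sq_nonneg l1)) (by linarith)
  nlinarith [h3]
end

section
/- If C ∈ ℝ^{n×k} satisfies CᵀC = I, with top block C^h ∈ ℝ^{k×k} and bottom block C^l ∈ ℝ^{(n−k)×k}, and Λ^h = diag(λ₁,…,λ_k) with λ₁ ≥ … ≥ λ_k > 0, then Tr(Λ^h − C^hᵀΛ^hC^h) ≥ λ_k Tr(C^lᵀC^l). -/
open Matrix

/-- If `C ∈ ℝ^{n×k}` satisfies `CᵀC = I`, with top block `Cʰ` and bottom block
`Cˡ`, and `Λʰ = diag(λ₁,…,λ_k)` with `λ₁ ≥ … ≥ λ_k > 0`, then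
`Tr(Λʰ − CʰᵀΛʰCʰ) ≥ λ_k Tr(CˡᵀCˡ)`.  Here the top block has `k+1` rows
(indexed by `Sum.inl`) and the bottom block `m` rows (indexed by `Sum.inr`). -/
theorem stmt_5 (k m : ℕ)
    (C : Matrix (Fin (k+1) ⊕ Fin m) (Fin (k+1)) ℝ)
    (hC : Cᵀ * C = 1)
    (lam : Fin (k+1) → ℝ)
    (hmono : ∀ i j : Fin (k+1), i ≤ j → lam j ≤ lam i)
    (hpos : 0 < lam (Fin.last k)) :
    lam (Fin.last k) * ((C.submatrix Sum.inr id)ᵀ * (C.submatrix Sum.inr id)).trace ≤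
      (Matrix.diagonal lam -
        (C.submatrix Sum.inl id)ᵀ * Matrix.diagonal lam * (C.submatrix Sum.inl id)).trace := by
  classical
  -- columns are orthonormal
  have hcol : ∀ j, ∑ x, C x j * C x j = (1 : ℝ) := by
    intro j
    have := congrFun (congrFun hC j) j
    simpa [Matrix.mul_apply, Matrix.one_apply, Matrix.transpose_apply] using this
  -- each row of C has squared norm ≤ 1
  have hrow : ∀ x, ∑ j, C x j * C x j ≤ (1 : ℝ) := by
    intro x
    set P := C * Cᵀ with hPdef
    have hPP : P * P = P := by
      rw [hPdef, Matrix.mul_assoc, ← Matrix.mul_assoc Cᵀ, hC, Matrix.one_mul]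
    have hPsym : ∀ a b, P a b = P b a := by
      intro a b; simp [hPdef, Matrix.mul_apply, mul_comm]
    have hPxx : P x x = ∑ y, P x y * P x y := by
      conv_lhs => rw [← hPP]
      rw [Matrix.mul_apply]
      exact Finset.sum_congr rfl fun y _ => by rw [hPsym y x]
    have hval : P x x = ∑ j, C x j * C x j := by
      simp [hPdef, Matrix.mul_apply]
    have hge : P x x * P x x ≤ ∑ y, P x y * P x y :=
      Finset.single_le_sum (f := fun y => P x y * P x y)
        (fun y _ => mul_self_nonneg _) (Finset.mem_univ x)
    have hnn : (0:ℝ) ≤ P x x := by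
      rw [hval]; exact Finset.sum_nonneg fun j _ => mul_self_nonneg _
    nlinarith [hPxx, hge, hnn, hval]
  set r : Fin (k+1) → ℝ := fun i => ∑ j, C (Sum.inl i) j * C (Sum.inl i) j with hr
  have hr1 : ∀ i, r i ≤ 1 := fun i => hrow (Sum.inl i)
  -- trace computations
  have h1 : ((C.submatrix Sum.inr id)ᵀ * (C.submatrix Sum.inr id)).trace
      = ∑ j, ∑ x : Fin m, C (Sum.inr x) j * C (Sum.inr x) j := by
    simp [Matrix.trace, Matrix.diag, Matrix.mul_apply]
  have h2 : ((C.submatrix Sum.inl id)ᵀ * Matrix.diagonal lam * (C.submatrix Sum.inl id)).trace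
      = ∑ i, lam i * r i := by
    rw [Matrix.mul_assoc, Matrix.trace]
    simp only [Matrix.diag, Matrix.mul_apply, Matrix.diagonal_mul, Matrix.transpose_apply,
      Matrix.submatrix_apply, id]
    rw [Finset.sum_comm]
    refine Finset.sum_congr rfl fun i _ => ?_
    simp only [hr, Finset.mul_sum]
    refine Finset.sum_congr rfl fun j _ => ?_
    rw [Matrix.diagonal]
    simp [Matrix.of_apply, ite_mul, Finset.sum_ite_eq]
    ring
  have h3 : (Matrix.diagonal lam).trace = ∑ i, lam i := Matrix.trace_diagonal lam
  have hsplit : ∀ j, (∑ i, C (Sum.inl i) j * C (Sum.inl i) j)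
      + (∑ x : Fin m, C (Sum.inr x) j * C (Sum.inr x) j) = 1 := by
    intro j
    rw [← hcol j, Fintype.sum_sum_type]
  have h4 : (∑ j, ∑ x : Fin m, C (Sum.inr x) j * C (Sum.inr x) j)
      = ∑ i, (1 - r i) := by
    have : ∀ j, (∑ x : Fin m, C (Sum.inr x) j * C (Sum.inr x) j)
        = 1 - ∑ i, C (Sum.inl i) j * C (Sum.inl i) j := by
      intro j; linarith [hsplit j]
    rw [Finset.sum_congr rfl fun j _ => this j, Finset.sum_sub_distrib, Finset.sum_comm]
    simp [hr, Finset.sum_sub_distrib]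
  rw [Matrix.trace_sub, h1, h2, h3, h4, Finset.mul_sum, ← Finset.sum_sub_distrib]
  refine Finset.sum_le_sum fun i _ => ?_
  have hmi : lam (Fin.last k) ≤ lam i := hmono i (Fin.last k) (Fin.le_last i)
  have := hr1 i
  nlinarith
end

section
/- (Lemma 4.3, trace bound) Tr(C^lᵀC^l) ≤ k(E(X^h) − E(Y)) / (λ_k − λ_{k+1}). -/
open Matrix

/-- Energy of the space spanned by a `B`-orthonormal matrix `Z`:
`E(Z) = Tr(ZᵀAZ)/Tr(ZᵀBZ)`. -/
noncomputable def energy {n k : Type*} [Fintype n] [Fintype k]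
    (A B : Matrix n n ℝ) (Z : Matrix n k ℝ) : ℝ :=
  (Zᵀ * A * Z).trace / (Zᵀ * B * Z).trace

set_option maxHeartbeats 1000000 in
/-- Lemma 4.3 (trace bound): `Tr(CˡᵀCˡ) ≤ k(E(Xʰ) − E(Y))/(λ_k − λ_{k+1})`.
The high block has size `k+1` and the low block size `m+1`; `λ_k` is
`lam (Sum.inl (Fin.last k))` and `λ_{k+1}` is `lam (Sum.inr 0)`. -/
theorem stmt_7 (k m : ℕ)
    (A B : Matrix (Fin (k+1) ⊕ Fin (m+1)) (Fin (k+1) ⊕ Fin (m+1)) ℝ)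
    (hA : A.PosDef) (hB : B.PosDef)
    (lam : Fin (k+1) ⊕ Fin (m+1) → ℝ)
    (X : Matrix (Fin (k+1) ⊕ Fin (m+1)) (Fin (k+1) ⊕ Fin (m+1)) ℝ)
    (heig : A * X = B * X * Matrix.diagonal lam)
    (hXB : Xᵀ * B * X = 1)
    (hXA : Xᵀ * A * X = Matrix.diagonal lam)
    (hmono_h : ∀ i j : Fin (k+1), i ≤ j → lam (Sum.inl j) ≤ lam (Sum.inl i))
    (hmono_l : ∀ i j : Fin (m+1), i ≤ j → lam (Sum.inr j) ≤ lam (Sum.inr i))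
    (hgap : lam (Sum.inr 0) < lam (Sum.inl (Fin.last k)))
    (hpos : ∀ i, 0 < lam i)
    (Y C : Matrix (Fin (k+1) ⊕ Fin (m+1)) (Fin (k+1)) ℝ)
    (hYB : Yᵀ * B * Y = 1)
    (hYC : Y = X * C) :
    ((C.submatrix Sum.inr id)ᵀ * (C.submatrix Sum.inr id)).trace ≤
      ((k : ℝ) + 1) * (energy A B (X.submatrix id Sum.inl) - energy A B Y) /
        (lam (Sum.inl (Fin.last k)) - lam (Sum.inr 0)) := by
  classical
  -- notation
  set s : (Fin (k+1) ⊕ Fin (m+1)) → ℝ := fun i => ∑ j, C i j * C i j with hs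
  -- C has orthonormal columns
  have hCC : Cᵀ * C = 1 := by
    have h1 : Cᵀ * (Xᵀ * B * X) * C = 1 := by
      have h := hYB
      rw [hYC] at h
      simp only [Matrix.transpose_mul, Matrix.mul_assoc] at h ⊢
      exact h
    rw [hXB, Matrix.mul_one] at h1
    exact h1
  have hcol : ∀ j : Fin (k+1), (∑ i, C i j * C i j) = 1 := by
    intro j
    have h := congrFun (congrFun hCC j) j
    simpa [Matrix.mul_apply, Matrix.one_apply, Matrix.transpose_apply] using h
  have hs_nonneg : ∀ i, 0 ≤ s i := by
    intro i
    exact Finset.sum_nonneg fun j _ => mul_self_nonneg _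
  -- total mass
  have hsum_s : ∑ i, s i = (k : ℝ) + 1 := by
    rw [show (∑ i, s i) = ∑ j : Fin (k+1), ∑ i, C i j * C i j from Finset.sum_comm]
    simp [hcol]
  -- each s i ≤ 1 : projection argument
  have hP : (C * Cᵀ) * (C * Cᵀ) = C * Cᵀ := by
    rw [Matrix.mul_assoc, ← Matrix.mul_assoc Cᵀ C Cᵀ, hCC, Matrix.one_mul]
  set M : Matrix (Fin (k+1) ⊕ Fin (m+1)) (Fin (k+1) ⊕ Fin (m+1)) ℝ := 1 - C * Cᵀ with hMdef
  have hM : M * M = M := by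
    rw [hMdef]
    simp only [Matrix.sub_mul, Matrix.mul_sub, Matrix.one_mul, Matrix.mul_one, hP]
    abel
  have hMsym : Mᵀ = M := by
    rw [hMdef]
    simp [Matrix.transpose_sub, Matrix.transpose_mul]
  have hPdiag : ∀ i, (C * Cᵀ) i i = s i := by
    intro i
    simp [Matrix.mul_apply, Matrix.transpose_apply, hs]
  have hs_le_one : ∀ i, s i ≤ 1 := by
    intro i
    have h1 : M i i = ∑ j, M i j * M i j := by
      conv_lhs => rw [← hM]
      rw [Matrix.mul_apply]
      refine Finset.sum_congr rfl fun j _ => ?_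
      congr 1
      have := congrFun (congrFun hMsym j) i
      simpa [Matrix.transpose_apply] using this.symm
    have h2 : 0 ≤ M i i := by
      rw [h1]
      exact Finset.sum_nonneg fun j _ => mul_self_nonneg _
    have h3 : M i i = 1 - s i := by
      rw [hMdef]
      simp [Matrix.sub_apply, Matrix.one_apply, hPdiag i]
    linarith [h2, h3 ▸ h2]
  -- trace of YᵀAY
  have hYAY : Yᵀ * A * Y = Cᵀ * Matrix.diagonal lam * C := by
    rw [← hXA, hYC]
    simp only [Matrix.transpose_mul, Matrix.mul_assoc]
  have hTrYA : (Yᵀ * A * Y).trace = ∑ i, lam i * s i := by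
    rw [hYAY]
    have hdiag : ∀ j : Fin (k+1), (Cᵀ * Matrix.diagonal lam * C) j j
        = ∑ i, lam i * (C i j * C i j) := by
      intro j
      rw [Matrix.mul_apply]
      refine Finset.sum_congr rfl fun i _ => ?_
      rw [Matrix.mul_diagonal, Matrix.transpose_apply]
      ring
    rw [Matrix.trace]
    simp only [Matrix.diag]
    rw [Finset.sum_congr rfl fun j _ => hdiag j, Finset.sum_comm]
    refine Finset.sum_congr rfl fun i _ => ?_
    rw [← Finset.mul_sum]
  -- trace of YᵀBY
  have hTrYB : (Yᵀ * B * Y).trace = (k : ℝ) + 1 := by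
    rw [hYB, Matrix.trace_one]
    simp
  -- the high-block of X
  have hXhA : ((X.submatrix id Sum.inl)ᵀ * A * (X.submatrix id Sum.inl))
      = (Xᵀ * A * X).submatrix Sum.inl Sum.inl := by
    ext i j
    simp [Matrix.mul_apply, Matrix.transpose_apply, Finset.sum_mul]
  have hXhB : ((X.submatrix id Sum.inl)ᵀ * B * (X.submatrix id Sum.inl))
      = (Xᵀ * B * X).submatrix Sum.inl Sum.inl := by
    ext i j
    simp [Matrix.mul_apply, Matrix.transpose_apply, Finset.sum_mul]
  have hTrXhA : ((X.submatrix id Sum.inl)ᵀ * A * (X.submatrix id Sum.inl)).trace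
      = ∑ i : Fin (k+1), lam (Sum.inl i) := by
    rw [hXhA, hXA]
    simp [Matrix.trace, Matrix.diag, Matrix.diagonal_apply_eq]
  have hTrXhB : ((X.submatrix id Sum.inl)ᵀ * B * (X.submatrix id Sum.inl)).trace
      = (k : ℝ) + 1 := by
    rw [hXhB, hXB]
    simp [Matrix.trace, Matrix.diag, Matrix.one_apply]
  -- energies
  have hk1 : ((k : ℝ) + 1) ≠ 0 := by positivity
  have hEh : energy A B (X.submatrix id Sum.inl)
      = (∑ i : Fin (k+1), lam (Sum.inl i)) / ((k : ℝ) + 1) := by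
    rw [energy, hTrXhA, hTrXhB]
  have hEy : energy A B Y = (∑ i, lam i * s i) / ((k : ℝ) + 1) := by
    rw [energy, hTrYA, hTrYB]
  -- LHS
  have hLHS : ((C.submatrix Sum.inr id)ᵀ * (C.submatrix Sum.inr id)).trace
      = ∑ i : Fin (m+1), s (Sum.inr i) := by
    rw [Matrix.trace]
    simp only [Matrix.diag, Matrix.mul_apply, Matrix.transpose_apply, Matrix.submatrix_apply,
      id_eq]
    rw [Finset.sum_comm]
  set T : ℝ := ∑ i : Fin (m+1), s (Sum.inr i) with hT
  -- split the total mass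
  have hsplit_mass : (∑ i : Fin (k+1), s (Sum.inl i)) + T = (k : ℝ) + 1 := by
    rw [hT, ← Fintype.sum_sum_type]
    exact hsum_s
  have hTh : ∑ i : Fin (k+1), (1 - s (Sum.inl i)) = T := by
    rw [Finset.sum_sub_distrib]
    simp only [Finset.sum_const, Finset.card_univ, Fintype.card_fin, nsmul_eq_mul, mul_one]
    push_cast
    linarith
  -- key inequalities
  have hI1 : lam (Sum.inl (Fin.last k)) * T
      ≤ ∑ i : Fin (k+1), lam (Sum.inl i) * (1 - s (Sum.inl i)) := by
    rw [← hTh, Finset.mul_sum]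
    refine Finset.sum_le_sum fun i _ => ?_
    have h1 : lam (Sum.inl (Fin.last k)) ≤ lam (Sum.inl i) :=
      hmono_h i (Fin.last k) (Fin.le_last i)
    have h2 : 0 ≤ 1 - s (Sum.inl i) := by linarith [hs_le_one (Sum.inl i)]
    nlinarith
  have hI2 : ∑ i : Fin (m+1), lam (Sum.inr i) * s (Sum.inr i)
      ≤ lam (Sum.inr 0) * T := by
    rw [hT, Finset.mul_sum]
    refine Finset.sum_le_sum fun i _ => ?_
    have h1 : lam (Sum.inr i) ≤ lam (Sum.inr 0) := hmono_l 0 i (Fin.zero_le i)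
    have h2 : 0 ≤ s (Sum.inr i) := hs_nonneg _
    nlinarith
  have hSsplit : (∑ i, lam i * s i)
      = (∑ i : Fin (k+1), lam (Sum.inl i) * s (Sum.inl i))
        + ∑ i : Fin (m+1), lam (Sum.inr i) * s (Sum.inr i) :=
    Fintype.sum_sum_type _
  have hsub : ∑ i : Fin (k+1), lam (Sum.inl i) * (1 - s (Sum.inl i))
      = (∑ i : Fin (k+1), lam (Sum.inl i))
        - ∑ i : Fin (k+1), lam (Sum.inl i) * s (Sum.inl i) := by
    rw [← Finset.sum_sub_distrib]
    refine Finset.sum_congr rfl fun i _ => ?_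
    ring
  -- final arithmetic
  have hg : (0 : ℝ) < lam (Sum.inl (Fin.last k)) - lam (Sum.inr 0) := by linarith
  rw [hLHS, le_div_iff₀ hg, hEh, hEy]
  have hnum : ((k : ℝ) + 1) * ((∑ i : Fin (k+1), lam (Sum.inl i)) / ((k : ℝ) + 1)
      - (∑ i, lam i * s i) / ((k : ℝ) + 1))
      = (∑ i : Fin (k+1), lam (Sum.inl i)) - ∑ i, lam i * s i := by
    field_simp
  rw [hnum]
  nlinarith [hI1, hI2, hSsplit, hsub]
end

section
/- (Lemma 4.3, invertibility) If E(X^h) − E(Y) < (λ_k − λ_{k+1})/k, then the k×k matrix C^h is invertible. -/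
open Matrix

set_option maxHeartbeats 1000000 in
/-- Lemma 4.3 (invertibility): if `E(Xʰ) − E(Y) < (λ_k − λ_{k+1})/k`, then the
`k×k` matrix `Cʰ` is invertible.  The high block has size `k+1` and the low
block size `m+1`. -/
theorem stmt_8 (k m : ℕ)
    (A B : Matrix (Fin (k+1) ⊕ Fin (m+1)) (Fin (k+1) ⊕ Fin (m+1)) ℝ)
    (hA : A.PosDef) (hB : B.PosDef)
    (lam : Fin (k+1) ⊕ Fin (m+1) → ℝ)
    (X : Matrix (Fin (k+1) ⊕ Fin (m+1)) (Fin (k+1) ⊕ Fin (m+1)) ℝ)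
    (heig : A * X = B * X * Matrix.diagonal lam)
    (hXB : Xᵀ * B * X = 1)
    (hXA : Xᵀ * A * X = Matrix.diagonal lam)
    (hmono_h : ∀ i j : Fin (k+1), i ≤ j → lam (Sum.inl j) ≤ lam (Sum.inl i))
    (hmono_l : ∀ i j : Fin (m+1), i ≤ j → lam (Sum.inr j) ≤ lam (Sum.inr i))
    (hgap : lam (Sum.inr 0) < lam (Sum.inl (Fin.last k)))
    (hpos : ∀ i, 0 < lam i)
    (Y C : Matrix (Fin (k+1) ⊕ Fin (m+1)) (Fin (k+1)) ℝ)
    (hYB : Yᵀ * B * Y = 1)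
    (hYC : Y = X * C)
    (hsmall : energy A B (X.submatrix id Sum.inl) - energy A B Y <
      (lam (Sum.inl (Fin.last k)) - lam (Sum.inr 0)) / ((k : ℝ) + 1)) :
    IsUnit (C.submatrix Sum.inl id) := by
  have hk1 : (0:ℝ) < (k:ℝ) + 1 := by positivity
  -- C has orthonormal columns
  have hCC : Cᵀ * C = 1 := by
    calc Cᵀ * C = Cᵀ * (Xᵀ * B * X) * C := by rw [hXB, Matrix.mul_one]
    _ = Yᵀ * B * Y := by rw [hYC]; simp only [Matrix.transpose_mul, Matrix.mul_assoc]
    _ = 1 := hYB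
  have hcol : ∀ j, ∑ i, C i j ^ 2 = 1 := by
    intro j
    have := congrFun (congrFun hCC j) j
    simpa [Matrix.mul_apply, Matrix.one_apply, sq] using this
  -- row sums of squares
  set r : (Fin (k+1) ⊕ Fin (m+1)) → ℝ := fun i => ∑ j, C i j ^ 2 with hr
  have hrow_nonneg : ∀ i, 0 ≤ r i := fun i => Finset.sum_nonneg fun j _ => sq_nonneg _
  have hrow_le : ∀ i, r i ≤ 1 := by
    intro i
    set P := C * Cᵀ with hPdef
    have hPP : P * P = P := by
      rw [hPdef, Matrix.mul_assoc, ← Matrix.mul_assoc Cᵀ, hCC, Matrix.one_mul]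
    have hPsymm : ∀ a b, P a b = P b a := by
      intro a b
      simp only [hPdef, Matrix.mul_apply, Matrix.transpose_apply]
      exact Finset.sum_congr rfl fun j _ => mul_comm _ _
    have hPii : P i i = ∑ j, (P i j) ^ 2 := by
      have h := congrFun (congrFun hPP i) i
      rw [Matrix.mul_apply] at h
      rw [← h]
      refine Finset.sum_congr rfl fun j _ => ?_
      rw [sq, hPsymm i j]
    have hri : r i = P i i := by
      simp [hr, hPdef, Matrix.mul_apply, Matrix.transpose_apply, sq]
    have h1 : (P i i) ^ 2 ≤ P i i := by
      nth_rewrite 2 [hPii]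
      exact Finset.single_le_sum (f := fun j => (P i j)^2) (fun j _ => sq_nonneg _) (Finset.mem_univ i)
    nlinarith [hri, h1]
  -- total mass
  have htot : ∑ i, r i = (k:ℝ) + 1 := by
    rw [hr, Finset.sum_comm]
    simp [hcol]
  -- energy of Xh
  have hXh : energy A B (X.submatrix id Sum.inl) = (∑ i, lam (Sum.inl i)) / ((k:ℝ) + 1) := by
    have hsub : ∀ (M : Matrix (Fin (k+1) ⊕ Fin (m+1)) (Fin (k+1) ⊕ Fin (m+1)) ℝ),
        (X.submatrix id Sum.inl)ᵀ * M * (X.submatrix id Sum.inl)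
          = (Xᵀ * M * X).submatrix Sum.inl Sum.inl := by
      intro M
      ext a b
      simp [Matrix.mul_apply, Finset.sum_mul]
    rw [energy, hsub, hsub, hXA, hXB]
    have h1 : ((1 : Matrix (Fin (k+1) ⊕ Fin (m+1)) (Fin (k+1) ⊕ Fin (m+1)) ℝ).submatrix
        Sum.inl Sum.inl).trace = (k:ℝ) + 1 := by
      simp [Matrix.trace, Matrix.diag, Matrix.one_apply]
    have h2 : ((Matrix.diagonal lam).submatrix Sum.inl Sum.inl).trace = ∑ i, lam (Sum.inl i) := by
      simp [Matrix.trace, Matrix.diag, Matrix.diagonal_apply]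
    rw [h1, h2]
  -- energy of Y
  have hYA : Yᵀ * A * Y = Cᵀ * Matrix.diagonal lam * C := by
    rw [hYC]
    calc (X*C)ᵀ * A * (X*C) = Cᵀ * (Xᵀ * A * X) * C := by
          simp only [Matrix.transpose_mul, Matrix.mul_assoc]
    _ = Cᵀ * Matrix.diagonal lam * C := by rw [hXA]
  have hEY : energy A B Y = (∑ i, lam i * r i) / ((k:ℝ) + 1) := by
    rw [energy, hYA, hYB]
    have h1 : (1 : Matrix (Fin (k+1)) (Fin (k+1)) ℝ).trace = (k:ℝ) + 1 := by
      simp [Matrix.trace]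
    have h2 : (Cᵀ * Matrix.diagonal lam * C).trace = ∑ i, lam i * r i := by
      rw [Matrix.trace]
      simp only [Matrix.diag, Matrix.mul_apply, Matrix.transpose_apply,
        Matrix.diagonal_apply, Finset.sum_mul]
      rw [Finset.sum_comm]
      refine Finset.sum_congr rfl fun i _ => ?_
      rw [hr, Finset.mul_sum]
      refine Finset.sum_congr rfl fun j _ => ?_
      rw [Finset.sum_eq_single i]
      · simp [sq]; ring
      · intro b _ hb; simp [hb]
      · simp
    rw [h1, h2]
  -- the numerator inequality from hsmall
  have hnum : (∑ i, lam (Sum.inl i)) - (∑ i, lam i * r i)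
      < lam (Sum.inl (Fin.last k)) - lam (Sum.inr 0) := by
    rw [hXh, hEY, div_sub_div_same, div_lt_div_iff₀ hk1 hk1] at hsmall
    exact (mul_lt_mul_iff_of_pos_right hk1).mp hsmall
  -- split sums
  set S : ℝ := ∑ l, r (Sum.inr l) with hS
  have hsplit : ∑ i, lam i * r i
      = ∑ i, lam (Sum.inl i) * r (Sum.inl i) + ∑ l, lam (Sum.inr l) * r (Sum.inr l) := by
    rw [Fintype.sum_sum_type]
  have hsplitr : ∑ i, r (Sum.inl i) + S = (k:ℝ) + 1 := by
    rw [hS, ← Fintype.sum_sum_type]; exact htot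
  -- lower bound: Sh - T ≥ (lk - l0) S
  have hlow : (lam (Sum.inl (Fin.last k)) - lam (Sum.inr 0)) * S
      ≤ (∑ i, lam (Sum.inl i)) - (∑ i, lam i * r i) := by
    have h1 : ∀ i : Fin (k+1), lam (Sum.inl (Fin.last k)) * (1 - r (Sum.inl i))
        ≤ lam (Sum.inl i) * (1 - r (Sum.inl i)) := by
      intro i
      exact mul_le_mul_of_nonneg_right (hmono_h i (Fin.last k) (Fin.le_last i))
        (by linarith [hrow_le (Sum.inl i)])
    have h2 : ∀ l : Fin (m+1), lam (Sum.inr l) * r (Sum.inr l)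
        ≤ lam (Sum.inr 0) * r (Sum.inr l) := by
      intro l
      exact mul_le_mul_of_nonneg_right (hmono_l 0 l (Fin.zero_le l)) (hrow_nonneg _)
    have hsum1 : lam (Sum.inl (Fin.last k)) * S ≤ ∑ i, lam (Sum.inl i) * (1 - r (Sum.inl i)) := by
      have hSeq : S = ∑ i : Fin (k+1), (1 - r (Sum.inl i)) := by
        have : ∑ i : Fin (k+1), (1 - r (Sum.inl i))
            = ((k:ℝ)+1) - ∑ i, r (Sum.inl i) := by
          rw [Finset.sum_sub_distrib]
          simp
        linarith [hsplitr]
      rw [hSeq, Finset.mul_sum]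
      exact Finset.sum_le_sum fun i _ => h1 i
    have hsum2 : ∑ l, lam (Sum.inr l) * r (Sum.inr l) ≤ lam (Sum.inr 0) * S := by
      rw [hS, Finset.mul_sum]
      exact Finset.sum_le_sum fun l _ => h2 l
    have hexp : ∑ i, lam (Sum.inl i) * (1 - r (Sum.inl i))
        = (∑ i, lam (Sum.inl i)) - ∑ i, lam (Sum.inl i) * r (Sum.inl i) := by
      rw [← Finset.sum_sub_distrib]
      exact Finset.sum_congr rfl fun i _ => by ring
    rw [hsplit, sub_mul]
    linarith [hsum1, hsum2, hexp.le, hexp.ge]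
  -- now suppose Ch is not invertible
  by_contra hC
  rw [Matrix.isUnit_iff_isUnit_det, isUnit_iff_ne_zero, not_ne_iff] at hC
  obtain ⟨v, hv0, hv⟩ := (Matrix.exists_mulVec_eq_zero_iff).2 hC
  -- v normalization
  set N : ℝ := ∑ j, v j ^ 2 with hN
  have hNpos : 0 < N := by
    have : ∃ j, v j ≠ 0 := by
      by_contra h
      push_neg at h
      exact hv0 (funext h)
    obtain ⟨j, hj⟩ := this
    have : 0 < v j ^ 2 := by positivity
    exact lt_of_lt_of_le this (Finset.single_le_sum (f := fun i => v i ^ 2) (fun i _ => sq_nonneg _) (Finset.mem_univ j))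
  -- Cv preserves norm
  have hCv : ∑ i, (C *ᵥ v) i ^ 2 = N := by
    have h1 : (C *ᵥ v) ⬝ᵥ (C *ᵥ v) = v ⬝ᵥ v := by
      rw [Matrix.dotProduct_mulVec, ← Matrix.mulVec_transpose, Matrix.mulVec_mulVec, hCC,
        Matrix.one_mulVec]
    rw [hN]
    simpa [dotProduct, sq] using h1
  -- high components vanish
  have hhigh : ∀ i : Fin (k+1), (C *ᵥ v) (Sum.inl i) = 0 := by
    intro i
    have : (C *ᵥ v) (Sum.inl i) = (C.submatrix Sum.inl id *ᵥ v) i := rfl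
    rw [this, hv, Pi.zero_apply]
  have hlowsum : ∑ l, (C *ᵥ v) (Sum.inr l) ^ 2 = N := by
    rw [← hCv, Fintype.sum_sum_type]
    simp [hhigh]
  -- Cauchy-Schwarz: each low component squared ≤ r * N
  have hCS : ∀ l : Fin (m+1), (C *ᵥ v) (Sum.inr l) ^ 2 ≤ r (Sum.inr l) * N := by
    intro l
    have : (C *ᵥ v) (Sum.inr l) = ∑ j, C (Sum.inr l) j * v j := rfl
    rw [this, hr, hN]
    exact Finset.sum_mul_sq_le_sq_mul_sq Finset.univ _ _
  have hSge : 1 ≤ S := by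
    have hle : N ≤ S * N := by
      calc N = ∑ l, (C *ᵥ v) (Sum.inr l) ^ 2 := hlowsum.symm
      _ ≤ ∑ l, r (Sum.inr l) * N := Finset.sum_le_sum fun l _ => hCS l
      _ = S * N := by rw [hS, Finset.sum_mul]
    have := (mul_le_mul_iff_of_pos_right hNpos).mp (by linarith [hle] : 1 * N ≤ S * N)
    exact this
  -- contradiction
  have hgapS : lam (Sum.inl (Fin.last k)) - lam (Sum.inr 0)
      ≤ (lam (Sum.inl (Fin.last k)) - lam (Sum.inr 0)) * S := by
    nlinarith [hSge, hgap]
  linarith [hlow, hnum, hgapS]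
end

section
/- (Theorem 4.4, first bound) Suppose E(X^h) − E(Y) ≤ (λ_k − λ_{k+1})/(2k). Then the Kolmogorov distance satisfies d(Y, X^h) ≤ √( λ_{k+1} ‖C^lᵀC^l‖ / (1 − ‖C^lᵀC^l‖) ), where ‖·‖ is the spectral norm. -/
open Matrix
open scoped Matrix.Norms.L2Operator

set_option linter.unusedSectionVars false
set_option maxHeartbeats 2000000

namespace Stmt14Aux

variable {n m k : Type*} [Fintype n] [Fintype m] [Fintype k] [DecidableEq n] [DecidableEq m] [DecidableEq k]

lemma dot_sq (v : n → ℝ) : v ⬝ᵥ v = ∑ i, v i ^ 2 := by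
  simp [dotProduct, sq]

lemma dot_nonneg' (v : n → ℝ) : 0 ≤ v ⬝ᵥ v := by
  rw [dot_sq]; positivity

lemma euc_norm (v : n → ℝ) : ‖(WithLp.equiv 2 (n → ℝ)).symm v‖ = Real.sqrt (v ⬝ᵥ v) := by
  rw [EuclideanSpace.norm_eq, dot_sq]
  congr 1
  apply Finset.sum_congr rfl
  intro i _
  simp [Real.norm_eq_abs, sq_abs]

lemma norm_mulVec_sqrt (M : Matrix m n ℝ) (v : n → ℝ) :
    Real.sqrt ((M *ᵥ v) ⬝ᵥ (M *ᵥ v)) ≤ ‖M‖ * Real.sqrt (v ⬝ᵥ v) := by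
  have h := M.l2_opNorm_mulVec ((WithLp.equiv 2 (n → ℝ)).symm v)
  have e1 : (EuclideanSpace.equiv m ℝ).symm (M *ᵥ ((WithLp.equiv 2 (n → ℝ)).symm v)) =
      (WithLp.equiv 2 (m → ℝ)).symm (M *ᵥ v) := rfl
  rw [e1, euc_norm, euc_norm] at h
  exact h

lemma dot_mulVec_le (M : Matrix n n ℝ) (v : n → ℝ) :
    v ⬝ᵥ (M *ᵥ v) ≤ ‖M‖ * (v ⬝ᵥ v) := by
  have hcs : (v ⬝ᵥ (M *ᵥ v)) ^ 2 ≤ (v ⬝ᵥ v) * ((M *ᵥ v) ⬝ᵥ (M *ᵥ v)) := by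
    rw [dot_sq, dot_sq]
    exact Finset.sum_mul_sq_le_sq_mul_sq _ _ _
  have h1 : v ⬝ᵥ (M *ᵥ v) ≤ Real.sqrt (v ⬝ᵥ v) * Real.sqrt ((M *ᵥ v) ⬝ᵥ (M *ᵥ v)) := by
    have := Real.sqrt_le_sqrt hcs
    rw [Real.sqrt_mul (dot_nonneg' v)] at this
    calc v ⬝ᵥ (M *ᵥ v) ≤ |v ⬝ᵥ (M *ᵥ v)| := le_abs_self _
    _ = Real.sqrt ((v ⬝ᵥ (M *ᵥ v))^2) := (Real.sqrt_sq_eq_abs _).symm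
    _ ≤ _ := this
  calc v ⬝ᵥ (M *ᵥ v) ≤ Real.sqrt (v ⬝ᵥ v) * Real.sqrt ((M *ᵥ v) ⬝ᵥ (M *ᵥ v)) := h1
  _ ≤ Real.sqrt (v ⬝ᵥ v) * (‖M‖ * Real.sqrt (v ⬝ᵥ v)) :=
      mul_le_mul_of_nonneg_left (norm_mulVec_sqrt M v) (Real.sqrt_nonneg _)
  _ = ‖M‖ * (Real.sqrt (v ⬝ᵥ v) * Real.sqrt (v ⬝ᵥ v)) := by ring
  _ = ‖M‖ * (v ⬝ᵥ v) := by rw [Real.mul_self_sqrt (dot_nonneg' v)]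

lemma opNorm_le (M : Matrix m n ℝ) (c : ℝ) (hc : 0 ≤ c)
    (h : ∀ v : n → ℝ, (M *ᵥ v) ⬝ᵥ (M *ᵥ v) ≤ c ^ 2 * (v ⬝ᵥ v)) : ‖M‖ ≤ c := by
  rw [Matrix.l2_opNorm_def]
  refine ContinuousLinearMap.opNorm_le_bound _ hc ?_
  intro x
  have e1 : ((Matrix.toEuclideanLin.trans LinearMap.toContinuousLinearMap) M) x =
      (WithLp.equiv 2 (m → ℝ)).symm (M *ᵥ ((WithLp.equiv 2 (n → ℝ)) x)) := rfl
  have e2 : x = (WithLp.equiv 2 (n → ℝ)).symm ((WithLp.equiv 2 (n → ℝ)) x) := rfl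
  rw [e1, euc_norm]
  conv_rhs => rw [e2, euc_norm]
  set v := (WithLp.equiv 2 (n → ℝ)) x
  calc Real.sqrt ((M *ᵥ v) ⬝ᵥ (M *ᵥ v)) ≤ Real.sqrt (c ^ 2 * (v ⬝ᵥ v)) :=
        Real.sqrt_le_sqrt (h v)
  _ = c * Real.sqrt (v ⬝ᵥ v) := by
      rw [Real.sqrt_mul (sq_nonneg c), Real.sqrt_sq hc]

lemma frob (N : Matrix m n ℝ) (v : n → ℝ) :
    (N *ᵥ v) ⬝ᵥ (N *ᵥ v) ≤ (∑ i, ∑ j, N i j ^ 2) * (v ⬝ᵥ v) := by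
  rw [dot_sq, dot_sq, Finset.sum_mul]
  apply Finset.sum_le_sum
  intro i _
  have : (N *ᵥ v) i = ∑ j, N i j * v j := rfl
  rw [this]
  exact Finset.sum_mul_sq_le_sq_mul_sq _ _ _

lemma conj_dot (M : Matrix n n ℝ) (P : Matrix n k ℝ) (δ : k → ℝ) :
    (P *ᵥ δ) ⬝ᵥ (M *ᵥ (P *ᵥ δ)) = δ ⬝ᵥ ((Pᵀ * M * P) *ᵥ δ) := by
  rw [← Matrix.mulVec_mulVec, ← Matrix.mulVec_mulVec, Matrix.dotProduct_mulVec δ,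
    Matrix.vecMul_transpose]

lemma tmul_dot (P : Matrix n k ℝ) (δ : k → ℝ) :
    δ ⬝ᵥ ((Pᵀ * P) *ᵥ δ) = (P *ᵥ δ) ⬝ᵥ (P *ᵥ δ) := by
  rw [← Matrix.mulVec_mulVec, Matrix.dotProduct_mulVec δ, Matrix.vecMul_transpose]

lemma subconj (e : k → n) (X M : Matrix n n ℝ) :
    (X.submatrix id e)ᵀ * M * (X.submatrix id e) = (Xᵀ * M * X).submatrix e e := by
  ext p q
  simp only [Matrix.mul_assoc, Matrix.mul_apply, Matrix.submatrix_apply, Matrix.transpose_apply,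
    id_eq]
  simp only [Finset.sum_mul, Finset.mul_sum]
  rw [Finset.sum_comm]
  apply Finset.sum_congr rfl
  intro a _
  apply Finset.sum_congr rfl
  intro b _
  ring

lemma key : ∀ u s a gg : ℝ, 0 ≤ gg → gg < 1 → u ≤ gg * s → s - u = a → a ≤ 1 →
    0 ≤ u → u * (1 - gg) ≤ gg := by
  intro u s a gg h1 h2 h3 h4 h5 h6
  nlinarith [mul_nonneg h1 (by linarith : (0:ℝ) ≤ 1 - (s - u))]

end Stmt14Aux

/-- Theorem 4.4 (first bound): if `E(Xʰ) − E(Y) ≤ (λ_k − λ_{k+1})/(2k)` then the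
Kolmogorov distance `d(Y, Xʰ) = sup_{‖α‖≤1} inf_β ‖Xʰα − Yβ‖_A` satisfies
`d(Y, Xʰ) ≤ √(λ_{k+1} ‖CˡᵀCˡ‖ / (1 − ‖CˡᵀCˡ‖))`, with `‖·‖` the spectral norm.
The high block has size `k+1` and the low block size `m+1`. -/
theorem stmt_14 (k m : ℕ)
    (A B : Matrix (Fin (k+1) ⊕ Fin (m+1)) (Fin (k+1) ⊕ Fin (m+1)) ℝ)
    (hA : A.PosDef) (hB : B.PosDef)
    (lam : Fin (k+1) ⊕ Fin (m+1) → ℝ)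
    (X : Matrix (Fin (k+1) ⊕ Fin (m+1)) (Fin (k+1) ⊕ Fin (m+1)) ℝ)
    (heig : A * X = B * X * Matrix.diagonal lam)
    (hXB : Xᵀ * B * X = 1)
    (hXA : Xᵀ * A * X = Matrix.diagonal lam)
    (hmono_h : ∀ i j : Fin (k+1), i ≤ j → lam (Sum.inl j) ≤ lam (Sum.inl i))
    (hmono_l : ∀ i j : Fin (m+1), i ≤ j → lam (Sum.inr j) ≤ lam (Sum.inr i))
    (hgap : lam (Sum.inr 0) < lam (Sum.inl (Fin.last k)))
    (hpos : ∀ i, 0 < lam i)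
    (Y C : Matrix (Fin (k+1) ⊕ Fin (m+1)) (Fin (k+1)) ℝ)
    (hYB : Yᵀ * B * Y = 1)
    (hYC : Y = X * C)
    (hsmall : energy A B (X.submatrix id Sum.inl) - energy A B Y ≤
      (lam (Sum.inl (Fin.last k)) - lam (Sum.inr 0)) / (2 * ((k : ℝ) + 1))) :
    (⨆ α : {a : Fin (k+1) → ℝ // ∑ i, a i ^ 2 ≤ 1}, ⨅ β : Fin (k+1) → ℝ,
        Real.sqrt (((X.submatrix id Sum.inl) *ᵥ (α : Fin (k+1) → ℝ) - Y *ᵥ β) ⬝ᵥ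
          A *ᵥ ((X.submatrix id Sum.inl) *ᵥ (α : Fin (k+1) → ℝ) - Y *ᵥ β))) ≤
      Real.sqrt (lam (Sum.inr 0) *
        ‖(C.submatrix Sum.inr id)ᵀ * (C.submatrix Sum.inr id)‖ /
        (1 - ‖(C.submatrix Sum.inr id)ᵀ * (C.submatrix Sum.inr id)‖)) := by
  classical
  set Xh := X.submatrix id Sum.inl with hXhdef
  set Ch := C.submatrix Sum.inl id with hChdef
  set Cl := C.submatrix Sum.inr id with hCldef
  set G := Clᵀ * Cl with hGdef
  set g := ‖G‖ with hgdef
  set lamK := lam (Sum.inl (Fin.last k)) with hlamKdef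
  set lam0 := lam (Sum.inr 0) with hlam0def
  -- C has orthonormal columns
  have hCC : Cᵀ * C = 1 := by
    have h1 : (X * C)ᵀ * B * (X * C) = Cᵀ * (Xᵀ * B * X) * C := by
      simp only [Matrix.transpose_mul, Matrix.mul_assoc]
    have h2 := hYB
    rw [hYC, h1, hXB, Matrix.mul_one] at h2
    exact h2
  have hcol : ∀ j, ∑ i, C i j ^ 2 = 1 := by
    intro j
    have h := congrFun (congrFun hCC j) j
    simp only [Matrix.mul_apply, Matrix.transpose_apply, Matrix.one_apply_eq] at h
    rw [← h]
    exact Finset.sum_congr rfl (fun i _ => (sq (C i j)).symm ▸ by ring)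
  -- rows of C have norm at most 1 (C Cᵀ is a projection)
  have hrow : ∀ i0, ∑ j, C i0 j ^ 2 ≤ 1 := by
    intro i0
    set P := C * Cᵀ with hPdef
    have hP : P * P = P := by
      rw [hPdef]
      calc C * Cᵀ * (C * Cᵀ) = C * (Cᵀ * C) * Cᵀ := by simp only [Matrix.mul_assoc]
      _ = C * Cᵀ := by rw [hCC, Matrix.mul_one]
    have hsym : ∀ a b, P a b = P b a := by
      intro a b
      rw [hPdef]
      simp only [Matrix.mul_apply, Matrix.transpose_apply]
      exact Finset.sum_congr rfl (fun i _ => mul_comm _ _)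
    have hdiag : P i0 i0 = ∑ j, C i0 j ^ 2 := by
      rw [hPdef]
      simp only [Matrix.mul_apply, Matrix.transpose_apply]
      exact Finset.sum_congr rfl (fun i _ => (sq (C i0 i)).symm ▸ by ring)
    have hPP := congrFun (congrFun hP i0) i0
    simp only [Matrix.mul_apply] at hPP
    have hPP2 : ∑ r, P i0 r ^ 2 = P i0 i0 := by
      rw [← hPP]
      exact Finset.sum_congr rfl (fun r _ => by rw [hsym r i0]; ring)
    have h1 : (P i0 i0) ^ 2 ≤ ∑ r, P i0 r ^ 2 :=
      Finset.single_le_sum (f := fun r => P i0 r ^ 2) (fun r _ => sq_nonneg _)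
        (Finset.mem_univ i0)
    have h2 : 0 ≤ P i0 i0 := by rw [hdiag]; positivity
    rw [← hdiag]
    nlinarith [h1.trans_eq hPP2]
  -- energies
  have htr_h : (Xhᵀ * A * Xh).trace = ∑ p, lam (Sum.inl p) := by
    rw [hXhdef, Stmt14Aux.subconj, hXA]
    simp [Matrix.trace, Matrix.diag]
  have htr_hb : (Xhᵀ * B * Xh).trace = ((k:ℝ)+1) := by
    rw [hXhdef, Stmt14Aux.subconj, hXB]
    simp [Matrix.trace, Matrix.diag, Finset.card_univ]
  have e_h : energy A B Xh = (∑ p, lam (Sum.inl p)) / ((k:ℝ)+1) := by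
    rw [energy, htr_h, htr_hb]
  have hYA : Yᵀ * A * Y = Cᵀ * (Xᵀ * A * X) * C := by
    rw [hYC]; simp only [Matrix.transpose_mul, Matrix.mul_assoc]
  have htr_y : (Yᵀ * A * Y).trace = ∑ j, ∑ i, lam i * C i j ^ 2 := by
    rw [hYA, hXA, Matrix.mul_assoc]
    simp only [Matrix.trace, Matrix.diag_apply, Matrix.mul_apply, Matrix.transpose_apply,
      Matrix.diagonal_apply, ite_mul, zero_mul, Finset.sum_ite_eq, Finset.mem_univ, if_true]
    exact Finset.sum_congr rfl (fun j _ => Finset.sum_congr rfl (fun i _ => by ring))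
  have htr_yb : (Yᵀ * B * Y).trace = ((k:ℝ)+1) := by
    rw [hYB]
    simp [Matrix.trace_one, Finset.card_univ]
  have e_y : energy A B Y = (∑ j, ∑ i, lam i * C i j ^ 2) / ((k:ℝ)+1) := by
    rw [energy, htr_y, htr_yb]
  -- trace of G is small
  set t := ∑ j, ∑ q, C (Sum.inr q) j ^ 2 with htdef
  have ht0 : (0:ℝ) ≤ t := by rw [htdef]; positivity
  have hsplitcol : ∀ j, (∑ p, C (Sum.inl p) j ^ 2) + (∑ q, C (Sum.inr q) j ^ 2) = 1 := by
    intro j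
    have h := hcol j
    rw [Fintype.sum_sum_type] at h
    exact h
  have hkey : (∑ p, ∑ j, C (Sum.inl p) j ^ 2) + t = ((k:ℝ)+1) := by
    calc (∑ p, ∑ j, C (Sum.inl p) j ^ 2) + t
        = (∑ j, ∑ p, C (Sum.inl p) j ^ 2) + ∑ j, ∑ q, C (Sum.inr q) j ^ 2 := by
          rw [Finset.sum_comm]
      _ = ∑ j : Fin (k+1), ((∑ p, C (Sum.inl p) j ^ 2) + ∑ q, C (Sum.inr q) j ^ 2) := by
          rw [Finset.sum_add_distrib]
      _ = ∑ _j : Fin (k+1), (1:ℝ) := Finset.sum_congr rfl (fun j _ => hsplitcol j)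
      _ = ((k:ℝ)+1) := by simp [Finset.sum_const, Finset.card_univ]
  have hsum_r : ∑ p, (1 - ∑ j, C (Sum.inl p) j ^ 2) = t := by
    rw [Finset.sum_sub_distrib]
    have : ∑ _p : Fin (k+1), (1:ℝ) = ((k:ℝ)+1) := by simp [Finset.sum_const, Finset.card_univ]
    rw [this]
    linarith [hkey]
  have hSy : (∑ j, ∑ i, lam i * C i j ^ 2)
      = (∑ p, lam (Sum.inl p) * ∑ j, C (Sum.inl p) j ^ 2)
        + ∑ q, lam (Sum.inr q) * ∑ j, C (Sum.inr q) j ^ 2 := by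
    rw [Finset.sum_comm, Fintype.sum_sum_type]
    simp_rw [Finset.mul_sum]
  have hB1 : lamK * t ≤ (∑ p, lam (Sum.inl p)) - ∑ p, lam (Sum.inl p) * ∑ j, C (Sum.inl p) j ^ 2 := by
    have hle : ∀ p ∈ Finset.univ, lamK * (1 - ∑ j, C (Sum.inl p) j ^ 2)
        ≤ lam (Sum.inl p) * (1 - ∑ j, C (Sum.inl p) j ^ 2) := fun p _ =>
      mul_le_mul_of_nonneg_right (hmono_h p (Fin.last k) (Fin.le_last p))
        (by linarith [hrow (Sum.inl p)])
    calc lamK * t = ∑ p, lamK * (1 - ∑ j, C (Sum.inl p) j ^ 2) := by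
          rw [← Finset.mul_sum, hsum_r]
    _ ≤ ∑ p, lam (Sum.inl p) * (1 - ∑ j, C (Sum.inl p) j ^ 2) := Finset.sum_le_sum hle
    _ = _ := by
        rw [← Finset.sum_sub_distrib]
        exact Finset.sum_congr rfl (fun p _ => by ring)
  have hB2 : ∑ q, lam (Sum.inr q) * ∑ j, C (Sum.inr q) j ^ 2 ≤ lam0 * t := by
    calc ∑ q, lam (Sum.inr q) * ∑ j, C (Sum.inr q) j ^ 2
        ≤ ∑ q, lam0 * ∑ j, C (Sum.inr q) j ^ 2 :=
          Finset.sum_le_sum (fun q _ => mul_le_mul_of_nonneg_right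
            (hmono_l 0 q (Fin.zero_le q)) (by positivity))
    _ = lam0 * t := by rw [← Finset.mul_sum, htdef, Finset.sum_comm]
  have hk1 : (0:ℝ) < (k:ℝ)+1 := by positivity
  have hgap' : (0:ℝ) < lamK - lam0 := by
    rw [hlamKdef, hlam0def]; linarith [hgap]
  have hsmall' : (∑ p, lam (Sum.inl p))/((k:ℝ)+1) - (∑ j, ∑ i, lam i * C i j ^ 2)/((k:ℝ)+1)
      ≤ (lamK - lam0) / (2*((k:ℝ)+1)) := by
    rw [← e_h, ← e_y]; exact hsmall
  have ht2 : t ≤ 1/2 := by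
    have hnum : (lamK - lam0) * t ≤ (∑ p, lam (Sum.inl p)) - ∑ j, ∑ i, lam i * C i j ^ 2 := by
      rw [hSy]; nlinarith [hB1, hB2]
    have h2 : ((∑ p, lam (Sum.inl p)) - ∑ j, ∑ i, lam i * C i j ^ 2) ≤ (lamK - lam0)/2 := by
      rw [div_sub_div_same, div_le_div_iff₀ hk1 (by positivity)] at hsmall'
      rw [le_div_iff₀ (by norm_num : (0:ℝ) < 2)]
      nlinarith [hsmall', hk1]
    nlinarith [hnum, h2, hgap', ht0]
  -- operator norm of G bounded by trace
  have hTrG : (∑ q, ∑ j, Cl q j ^ 2) = t := by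
    rw [hCldef, htdef, Finset.sum_comm]
    simp [Matrix.submatrix_apply]
  have hgle : g ≤ t := by
    rw [hgdef, hGdef]
    apply Stmt14Aux.opNorm_le _ t ht0
    intro v
    rw [← Matrix.mulVec_mulVec]
    have hTrG' : (∑ i, ∑ j, Clᵀ i j ^ 2) = t := by
      rw [Finset.sum_comm]
      exact hTrG
    calc (Clᵀ *ᵥ (Cl *ᵥ v)) ⬝ᵥ (Clᵀ *ᵥ (Cl *ᵥ v))
        ≤ (∑ i, ∑ j, Clᵀ i j ^ 2) * ((Cl *ᵥ v) ⬝ᵥ (Cl *ᵥ v)) := Stmt14Aux.frob _ _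
      _ = t * ((Cl *ᵥ v) ⬝ᵥ (Cl *ᵥ v)) := by rw [hTrG']
      _ ≤ t * ((∑ q, ∑ j, Cl q j ^ 2) * (v ⬝ᵥ v)) :=
          mul_le_mul_of_nonneg_left (Stmt14Aux.frob _ _) ht0
      _ = t ^ 2 * (v ⬝ᵥ v) := by rw [hTrG]; ring
  have hg0 : (0:ℝ) ≤ g := norm_nonneg _
  have hg1 : g < 1 := by linarith
  have h1g : (0:ℝ) < 1 - g := by linarith
  have hGub : ∀ v : Fin (k+1) → ℝ, v ⬝ᵥ (G *ᵥ v) ≤ g * (v ⬝ᵥ v) := fun v =>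
    Stmt14Aux.dot_mulVec_le G v
  have hGdot : ∀ v : Fin (k+1) → ℝ, v ⬝ᵥ (G *ᵥ v) = (Cl *ᵥ v) ⬝ᵥ (Cl *ᵥ v) := fun v => by
    rw [hGdef]; exact Stmt14Aux.tmul_dot Cl v
  -- Ch is invertible
  have hsplitCC : Chᵀ * Ch + G = 1 := by
    rw [hChdef, hGdef, hCldef]
    ext i j
    have h := congrFun (congrFun hCC i) j
    simp only [Matrix.mul_apply, Matrix.transpose_apply] at h
    simp only [Matrix.add_apply, Matrix.mul_apply, Matrix.transpose_apply,
      Matrix.submatrix_apply, id_eq]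
    rw [← h, Fintype.sum_sum_type]
  have hChCh : Chᵀ * Ch = 1 - G := eq_sub_of_add_eq hsplitCC
  have hquad : ∀ x : Fin (k+1) → ℝ, x ⬝ᵥ ((Chᵀ * Ch) *ᵥ x) = x ⬝ᵥ x - x ⬝ᵥ (G *ᵥ x) := by
    intro x
    rw [hChCh, Matrix.sub_mulVec, Matrix.one_mulVec, dotProduct_sub]
  have hdet : IsUnit Ch.det := by
    have hpd : (Chᵀ * Ch).PosDef := by
      rw [Matrix.posDef_iff_dotProduct_mulVec]
      constructor
      · have := Matrix.isHermitian_conjTranspose_mul_self Ch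
        rwa [Matrix.conjTranspose_eq_transpose_of_trivial] at this
      · intro x hx
        have hxx : (0:ℝ) < x ⬝ᵥ x := by
          rcases lt_or_eq_of_le (Stmt14Aux.dot_nonneg' x) with h | h
          · exact h
          · exfalso; exact hx ((dotProduct_self_eq_zero).mp h.symm)
        have h1 : x ⬝ᵥ ((Chᵀ * Ch) *ᵥ x) = x ⬝ᵥ x - x ⬝ᵥ (G *ᵥ x) := hquad x
        have h2 : x ⬝ᵥ (G *ᵥ x) ≤ g * (x ⬝ᵥ x) := hGub x
        have : (0:ℝ) < x ⬝ᵥ ((Chᵀ * Ch) *ᵥ x) := by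
          rw [h1]; nlinarith [hxx, hg1]
        simpa [star_trivial] using this
    have hd := hpd.det_pos
    rw [Matrix.det_mul, Matrix.det_transpose] at hd
    exact isUnit_iff_ne_zero.mpr (mul_self_pos.mp hd)
  have hinv : Ch * Ch⁻¹ = 1 := Matrix.mul_nonsing_inv Ch hdet
  -- final bound
  haveI : Nonempty {a : Fin (k+1) → ℝ // ∑ i, a i ^ 2 ≤ 1} := ⟨⟨0, by simp⟩⟩
  apply ciSup_le
  rintro ⟨α, hα⟩
  have hbdd : BddBelow (Set.range (fun β : Fin (k+1) → ℝ =>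
      Real.sqrt ((Xh *ᵥ α - Y *ᵥ β) ⬝ᵥ A *ᵥ (Xh *ᵥ α - Y *ᵥ β)))) := by
    refine ⟨0, ?_⟩
    rintro x ⟨β, rfl⟩
    exact Real.sqrt_nonneg _
  show (⨅ β : Fin (k+1) → ℝ,
      Real.sqrt ((Xh *ᵥ α - Y *ᵥ β) ⬝ᵥ A *ᵥ (Xh *ᵥ α - Y *ᵥ β))) ≤ _
  refine ciInf_le_of_le hbdd (Ch⁻¹ *ᵥ α) ?_
  set β := Ch⁻¹ *ᵥ α with hβdef
  apply Real.sqrt_le_sqrt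
  have hCb : Ch *ᵥ β = α := by
    rw [hβdef, Matrix.mulVec_mulVec, hinv, Matrix.one_mulVec]
  set w := Cl *ᵥ β with hwdef
  have hdiff : Xh *ᵥ α - Y *ᵥ β = X *ᵥ (Sum.elim (0 : Fin (k+1) → ℝ) (-w)) := by
    rw [hYC, ← Matrix.mulVec_mulVec]
    have h1 : Xh *ᵥ α = X *ᵥ (Sum.elim α (0 : Fin (m+1) → ℝ)) := by
      funext i
      rw [hXhdef]
      simp [Matrix.mulVec, dotProduct, Fintype.sum_sum_type, Matrix.submatrix_apply]
    have h2l : ∀ p, (C *ᵥ β) (Sum.inl p) = (Ch *ᵥ β) p := by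
      intro p
      rw [hChdef]
      simp [Matrix.mulVec, dotProduct, Matrix.submatrix_apply]
    have h2r : ∀ q, (C *ᵥ β) (Sum.inr q) = w q := by
      intro q
      rw [hwdef, hCldef]
      simp [Matrix.mulVec, dotProduct, Matrix.submatrix_apply]
    have harg : Sum.elim α (0 : Fin (m+1) → ℝ) - C *ᵥ β
        = Sum.elim (0 : Fin (k+1) → ℝ) (-w) := by
      funext i
      cases i with
      | inl p => simp [Pi.sub_apply, h2l p, hCb]
      | inr q => simp [Pi.sub_apply, h2r q]
    rw [h1, ← Matrix.mulVec_sub, harg]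
  have hV : (Xh *ᵥ α - Y *ᵥ β) ⬝ᵥ A *ᵥ (Xh *ᵥ α - Y *ᵥ β)
      = ∑ q, lam (Sum.inr q) * (w q) ^ 2 := by
    rw [hdiff, Stmt14Aux.conj_dot, hXA]
    have : (Sum.elim (0 : Fin (k+1) → ℝ) (-w)) ⬝ᵥ (Matrix.diagonal lam *ᵥ
        (Sum.elim (0 : Fin (k+1) → ℝ) (-w)))
        = ∑ i, lam i * ((Sum.elim (0 : Fin (k+1) → ℝ) (-w)) i) ^ 2 := by
      simp only [dotProduct, Matrix.mulVec_diagonal]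
      exact Finset.sum_congr rfl (fun i _ => by ring)
    rw [this, Fintype.sum_sum_type]
    simp
  have hwdot : w ⬝ᵥ w = β ⬝ᵥ (G *ᵥ β) := (hGdot β).symm
  have hαα : α ⬝ᵥ α ≤ 1 := by rw [Stmt14Aux.dot_sq]; exact hα
  have hs : β ⬝ᵥ β - β ⬝ᵥ (G *ᵥ β) = α ⬝ᵥ α := by
    rw [← hquad β, Stmt14Aux.tmul_dot Ch β, hCb]
  have hu0 : (0:ℝ) ≤ β ⬝ᵥ (G *ᵥ β) := by
    rw [hGdot]; exact Stmt14Aux.dot_nonneg' _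
  have hsnn : (0:ℝ) ≤ β ⬝ᵥ β := Stmt14Aux.dot_nonneg' β
  have hub : β ⬝ᵥ (G *ᵥ β) ≤ g / (1 - g) := by
    rw [le_div_iff₀ h1g]
    exact Stmt14Aux.key (β ⬝ᵥ (G *ᵥ β)) (β ⬝ᵥ β) (α ⬝ᵥ α) g hg0 hg1 (hGub β) hs hαα hu0
  calc (Xh *ᵥ α - Y *ᵥ β) ⬝ᵥ A *ᵥ (Xh *ᵥ α - Y *ᵥ β)
      = ∑ q, lam (Sum.inr q) * (w q) ^ 2 := hV
    _ ≤ ∑ q, lam0 * (w q) ^ 2 := Finset.sum_le_sum (fun q _ =>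
        mul_le_mul_of_nonneg_right (hmono_l 0 q (Fin.zero_le q)) (sq_nonneg _))
    _ = lam0 * (w ⬝ᵥ w) := by rw [Stmt14Aux.dot_sq, Finset.mul_sum]
    _ = lam0 * (β ⬝ᵥ (G *ᵥ β)) := by rw [hwdot]
    _ ≤ lam0 * (g / (1 - g)) := mul_le_mul_of_nonneg_left hub (le_of_lt (hpos _))
    _ = lam0 * g / (1 - g) := (mul_div_assoc _ _ _).symm
end

section
/- (Theorem 4.4, second bound) Suppose E(X^h) − E(Y) ≤ (λ_k − λ_{k+1})/(2k). Then d(Y, X^h) ≤ √( 2λ_{k+1} · k(E(X^h) − E(Y)) / (λ_k − λ_{k+1}) ). -/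
open Matrix

set_option maxHeartbeats 1000000

private lemma aux_div (x c : ℝ) (hc : c ≠ 0) : x / (2 * c) * c = x / 2 := by
  field_simp

/-- Theorem 4.4 (second bound): if `E(Xʰ) − E(Y) ≤ (λ_k − λ_{k+1})/(2k)` then
the Kolmogorov distance `d(Y, Xʰ) = sup_{‖α‖≤1} inf_β ‖Xʰα − Yβ‖_A` satisfies
`d(Y, Xʰ) ≤ √(2 λ_{k+1} k(E(Xʰ) − E(Y))/(λ_k − λ_{k+1}))`.
The high block has size `k+1` and the low block size `m+1`. -/
theorem stmt_15 (k m : ℕ)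
    (A B : Matrix (Fin (k+1) ⊕ Fin (m+1)) (Fin (k+1) ⊕ Fin (m+1)) ℝ)
    (hA : A.PosDef) (hB : B.PosDef)
    (lam : Fin (k+1) ⊕ Fin (m+1) → ℝ)
    (X : Matrix (Fin (k+1) ⊕ Fin (m+1)) (Fin (k+1) ⊕ Fin (m+1)) ℝ)
    (heig : A * X = B * X * Matrix.diagonal lam)
    (hXB : Xᵀ * B * X = 1)
    (hXA : Xᵀ * A * X = Matrix.diagonal lam)
    (hmono_h : ∀ i j : Fin (k+1), i ≤ j → lam (Sum.inl j) ≤ lam (Sum.inl i))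
    (hmono_l : ∀ i j : Fin (m+1), i ≤ j → lam (Sum.inr j) ≤ lam (Sum.inr i))
    (hgap : lam (Sum.inr 0) < lam (Sum.inl (Fin.last k)))
    (hpos : ∀ i, 0 < lam i)
    (Y C : Matrix (Fin (k+1) ⊕ Fin (m+1)) (Fin (k+1)) ℝ)
    (hYB : Yᵀ * B * Y = 1)
    (hYC : Y = X * C)
    (hsmall : energy A B (X.submatrix id Sum.inl) - energy A B Y ≤
      (lam (Sum.inl (Fin.last k)) - lam (Sum.inr 0)) / (2 * ((k : ℝ) + 1))) :
    (⨆ α : {a : Fin (k+1) → ℝ // ∑ i, a i ^ 2 ≤ 1}, ⨅ β : Fin (k+1) → ℝ,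
        Real.sqrt (((X.submatrix id Sum.inl) *ᵥ (α : Fin (k+1) → ℝ) - Y *ᵥ β) ⬝ᵥ
          A *ᵥ ((X.submatrix id Sum.inl) *ᵥ (α : Fin (k+1) → ℝ) - Y *ᵥ β))) ≤
      Real.sqrt (2 * lam (Sum.inr 0) *
        (((k : ℝ) + 1) * (energy A B (X.submatrix id Sum.inl) - energy A B Y)) /
        (lam (Sum.inl (Fin.last k)) - lam (Sum.inr 0))) := by
  classical
  set lk : ℝ := lam (Sum.inl (Fin.last k)) with hlk
  set ll : ℝ := lam (Sum.inr 0) with hll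
  have hg : (0:ℝ) < lk - ll := sub_pos.mpr hgap
  -- C has orthonormal columns
  have hCC : Cᵀ * C = 1 := by
    have h := hYB
    rw [hYC, transpose_mul] at h
    rw [show Cᵀ * Xᵀ * B * (X * C) = Cᵀ * (Xᵀ * B * X) * C by
      simp only [Matrix.mul_assoc]] at h
    rwa [hXB, Matrix.mul_one] at h
  -- squared row sums
  set s : (Fin (k+1) ⊕ Fin (m+1)) → ℝ := fun i => ∑ j, C i j ^ 2 with hs_def
  have hs_nonneg : ∀ i, 0 ≤ s i := fun i => Finset.sum_nonneg fun j _ => sq_nonneg _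
  -- each row sum ≤ 1 via the projector C Cᵀ
  have hs_le_one : ∀ i, s i ≤ 1 := by
    intro i
    set P : Matrix (Fin (k+1) ⊕ Fin (m+1)) (Fin (k+1) ⊕ Fin (m+1)) ℝ := C * Cᵀ with hP
    have hPP : P * P = P := by
      rw [hP, Matrix.mul_assoc, ← Matrix.mul_assoc Cᵀ C Cᵀ, hCC, Matrix.one_mul]
    have hPii : P i i = s i := by
      simp [hP, Matrix.mul_apply, hs_def, sq]
    have hPsym : ∀ l, P l i = P i l := by
      intro l
      simp [hP, Matrix.mul_apply, mul_comm]
    have h1 : s i = ∑ l, (P i l)^2 := by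
      have := congrFun (congrFun hPP i) i
      rw [show (P*P) i i = ∑ l, P i l * P l i from Matrix.mul_apply] at this
      rw [← hPii, ← this]
      apply Finset.sum_congr rfl
      intro l _
      rw [hPsym l, sq]
    have h2 : (s i)^2 ≤ s i := by
      conv_rhs => rw [h1]
      rw [← hPii]
      exact Finset.single_le_sum (fun l _ => sq_nonneg (P i l)) (Finset.mem_univ i)
    nlinarith [hs_nonneg i]
  -- sum of all row sums = k+1
  have hs_total : ∑ i, s i = (k:ℝ) + 1 := by
    have h := congrArg Matrix.trace hCC
    rw [Matrix.trace_one] at h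
    have h2 : (Cᵀ * C).trace = ∑ j, ∑ i, C i j ^ 2 := by
      simp [Matrix.trace, Matrix.diag, Matrix.mul_apply, sq]
    rw [h2] at h
    calc ∑ i, s i = ∑ i, ∑ j, C i j ^ 2 := rfl
      _ = ∑ j, ∑ i, C i j ^ 2 := Finset.sum_comm
      _ = (k:ℝ) + 1 := by rw [h]; simp
  -- energy of the high block
  have hXh_A : (X.submatrix id Sum.inl)ᵀ * A * (X.submatrix id Sum.inl)
      = Matrix.diagonal (lam ∘ Sum.inl) := by
    rw [Matrix.transpose_submatrix]
    have e1 : Xᵀ.submatrix Sum.inl id * A = (Xᵀ * A).submatrix Sum.inl id := by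
      have h := Matrix.submatrix_mul Xᵀ A Sum.inl id id Function.bijective_id
      rw [Matrix.submatrix_id_id] at h
      exact h.symm
    rw [e1, ← Matrix.submatrix_mul (Xᵀ * A) X Sum.inl id Sum.inl Function.bijective_id,
      hXA, Matrix.submatrix_diagonal lam Sum.inl Sum.inl_injective]
  have hXh_B : (X.submatrix id Sum.inl)ᵀ * B * (X.submatrix id Sum.inl) = 1 := by
    rw [Matrix.transpose_submatrix]
    have e1 : Xᵀ.submatrix Sum.inl id * B = (Xᵀ * B).submatrix Sum.inl id := by
      have h := Matrix.submatrix_mul Xᵀ B Sum.inl id id Function.bijective_id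
      rw [Matrix.submatrix_id_id] at h
      exact h.symm
    rw [e1, ← Matrix.submatrix_mul (Xᵀ * B) X Sum.inl id Sum.inl Function.bijective_id,
      hXB, Matrix.submatrix_one Sum.inl Sum.inl_injective]
  have hEX : energy A B (X.submatrix id Sum.inl) = (∑ a, lam (Sum.inl a)) / ((k:ℝ) + 1) := by
    rw [energy, hXh_A, hXh_B, Matrix.trace_one, Matrix.trace_diagonal]
    simp [Function.comp]
  -- energy of Y
  have hYA : Yᵀ * A * Y = Cᵀ * Matrix.diagonal lam * C := by
    rw [hYC, transpose_mul]
    rw [show Cᵀ * Xᵀ * A * (X * C) = Cᵀ * (Xᵀ * A * X) * C by simp only [Matrix.mul_assoc]]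
    rw [hXA]
  have hEY : energy A B Y = (∑ i, lam i * s i) / ((k:ℝ) + 1) := by
    rw [energy, hYA, hYB, Matrix.trace_one]
    have h2 : (Cᵀ * Matrix.diagonal lam * C).trace = ∑ j, ∑ i, C i j * lam i * C i j := by
      simp [Matrix.trace, Matrix.diag, Matrix.mul_apply, Matrix.diagonal, Finset.sum_mul]
    rw [h2, Finset.sum_comm]
    congr 1
    · apply Finset.sum_congr rfl
      intro i _
      rw [hs_def, Finset.mul_sum]
      apply Finset.sum_congr rfl
      intro j _
      ring
    · simp
  -- the key quantities
  set t : ℝ := ∑ b, s (Sum.inr b) with ht_def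
  have ht_nonneg : 0 ≤ t := Finset.sum_nonneg fun b _ => hs_nonneg _
  set N : ℝ := (∑ a, lam (Sum.inl a)) - ∑ i, lam i * s i with hN_def
  have hk1 : (0:ℝ) < (k:ℝ) + 1 := by positivity
  have hDE : energy A B (X.submatrix id Sum.inl) - energy A B Y = N / ((k:ℝ) + 1) := by
    rw [hEX, hEY, div_sub_div_same]
  -- split N and bound from below
  have hsplit : ∑ a, (1 - s (Sum.inl a)) = t := by
    have := hs_total
    rw [Fintype.sum_sum_type] at this
    rw [Finset.sum_sub_distrib]
    simp only [Finset.sum_const, Finset.card_univ, Fintype.card_fin, nsmul_eq_mul, mul_one]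
    push_cast
    linarith
  have hNt : (lk - ll) * t ≤ N := by
    have hNeq : N = (∑ a, lam (Sum.inl a) * (1 - s (Sum.inl a)))
        - ∑ b, lam (Sum.inr b) * s (Sum.inr b) := by
      rw [hN_def, Fintype.sum_sum_type]
      have : ∑ a, lam (Sum.inl a) * (1 - s (Sum.inl a))
          = ∑ a, lam (Sum.inl a) - ∑ a, lam (Sum.inl a) * s (Sum.inl a) := by
        rw [← Finset.sum_sub_distrib]
        apply Finset.sum_congr rfl; intro a _; ring
      rw [this]; ring
    have h1 : lk * t ≤ ∑ a, lam (Sum.inl a) * (1 - s (Sum.inl a)) := by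
      rw [← hsplit, Finset.mul_sum]
      apply Finset.sum_le_sum
      intro a _
      have := hmono_h a (Fin.last k) (Fin.le_last a)
      have h1s := hs_le_one (Sum.inl a)
      nlinarith
    have h2 : ∑ b, lam (Sum.inr b) * s (Sum.inr b) ≤ ll * t := by
      rw [ht_def, Finset.mul_sum]
      apply Finset.sum_le_sum
      intro b _
      have := hmono_l 0 b (Fin.zero_le b)
      have h0s := hs_nonneg (Sum.inr b)
      nlinarith
    rw [hNeq]
    nlinarith
  clear_value t N
  have hNsmall : N ≤ (lk - ll) / 2 := by
    rw [hDE] at hsmall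
    have h := mul_le_mul_of_nonneg_right hsmall hk1.le
    rw [div_mul_cancel₀ _ (ne_of_gt hk1)] at h
    rw [aux_div _ _ (ne_of_gt hk1)] at h
    exact h
  have ht_half : t ≤ 1/2 := by
    by_contra hcon
    push_neg at hcon
    have h := mul_lt_mul_of_pos_left hcon hg
    linarith
  have htN : t ≤ N / (lk - ll) := by
    rw [le_div_iff₀ hg]
    calc t * (lk - ll) = (lk - ll) * t := by ring
      _ ≤ N := hNt
  -- high and low blocks of C
  set Ch : Matrix (Fin (k+1)) (Fin (k+1)) ℝ := Matrix.of fun a j => C (Sum.inl a) j with hCh_def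
  set Cl : Matrix (Fin (m+1)) (Fin (k+1)) ℝ := Matrix.of fun b j => C (Sum.inr b) j with hCl_def
  -- orthogonality of columns in terms of blocks
  have hnorm : ∀ v : Fin (k+1) → ℝ,
      (∑ a, ((Ch *ᵥ v) a)^2) + (∑ b, ((Cl *ᵥ v) b)^2) = ∑ j, v j ^ 2 := by
    intro v
    have h2 : (C *ᵥ v) ᵥ* C = v := by
      rw [show C = (Cᵀ)ᵀ from (transpose_transpose C).symm, Matrix.vecMul_transpose,
        Matrix.mulVec_mulVec, transpose_transpose, hCC, Matrix.one_mulVec]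
    have h1 : (C *ᵥ v) ⬝ᵥ (C *ᵥ v) = v ⬝ᵥ v := by
      rw [Matrix.dotProduct_mulVec, h2]
    have h3 : (C *ᵥ v) ⬝ᵥ (C *ᵥ v) = ∑ i, ((C *ᵥ v) i)^2 := by
      simp [dotProduct, sq]
    have h4 : v ⬝ᵥ v = ∑ j, v j ^ 2 := by simp [dotProduct, sq]
    rw [h3, h4, Fintype.sum_sum_type] at h1
    exact h1
  -- Cauchy-Schwarz row-wise for the low block
  have hCl_bound : ∀ v : Fin (k+1) → ℝ,
      ∑ b, ((Cl *ᵥ v) b)^2 ≤ t * ∑ j, v j ^ 2 := by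
    intro v
    have hb : ∀ b, ((Cl *ᵥ v) b)^2 ≤ s (Sum.inr b) * ∑ j, v j ^ 2 := by
      intro b
      have h := Finset.sum_mul_sq_le_sq_mul_sq Finset.univ (fun j => C (Sum.inr b) j) v
      simpa [Matrix.mulVec, dotProduct, hs_def, hCl_def] using h
    calc ∑ b, ((Cl *ᵥ v) b)^2 ≤ ∑ b, s (Sum.inr b) * ∑ j, v j ^ 2 :=
          Finset.sum_le_sum (fun b _ => hb b)
      _ = t * ∑ j, v j ^ 2 := by rw [ht_def, Finset.sum_mul]
  -- Ch is invertible
  have hCh_inj : Function.Injective Ch.mulVecLin := by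
    rw [← LinearMap.ker_eq_bot, LinearMap.ker_eq_bot']
    intro v hv
    rw [Matrix.mulVecLin_apply] at hv
    have h1 := hnorm v
    rw [hv] at h1
    simp only [Pi.zero_apply, ne_eq, OfNat.ofNat_ne_zero, not_false_eq_true, zero_pow,
      Finset.sum_const_zero, zero_add] at h1
    have h2 := hCl_bound v
    have hWnn : (0:ℝ) ≤ ∑ j, v j ^ 2 := Finset.sum_nonneg fun j _ => sq_nonneg _
    have h3 : t * ∑ j, v j ^ 2 ≤ (1/2) * ∑ j, v j ^ 2 :=
      mul_le_mul_of_nonneg_right ht_half hWnn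
    have hS0 : ∑ j, v j ^ 2 = 0 := by linarith
    have hz := (Finset.sum_eq_zero_iff_of_nonneg (fun j _ => sq_nonneg (v j))).mp hS0
    funext j
    exact (pow_eq_zero_iff two_ne_zero).mp (hz j (Finset.mem_univ j))
  have hCh_surj : Function.Surjective Ch.mulVecLin :=
    LinearMap.injective_iff_surjective.mp hCh_inj
  -- symmetry of A
  have hAsym : Aᵀ = A := by
    have := hA.1
    simpa [Matrix.IsHermitian, Matrix.conjTranspose_eq_transpose_of_trivial] using this
  -- nonempty index type for the sup
  have hne : Nonempty {a : Fin (k+1) → ℝ // ∑ i, a i ^ 2 ≤ 1} :=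
    ⟨⟨0, by simp⟩⟩
  apply ciSup_le
  rintro ⟨α, hα⟩
  obtain ⟨w, hw⟩ := hCh_surj α
  rw [Matrix.mulVecLin_apply] at hw
  -- norm bounds for w
  have hwkey := hnorm w
  rw [hw] at hwkey
  have hLw := hCl_bound w
  have hWnn : (0:ℝ) ≤ ∑ j, w j ^ 2 := Finset.sum_nonneg fun j _ => sq_nonneg _
  have h3 : t * ∑ j, w j ^ 2 ≤ (1/2) * ∑ j, w j ^ 2 :=
    mul_le_mul_of_nonneg_right ht_half hWnn
  have hW2 : ∑ j, w j ^ 2 ≤ 2 := by linarith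
  have hL2 : ∑ b, ((Cl *ᵥ w) b)^2 ≤ 2 * t := by
    have h4 : t * ∑ j, w j ^ 2 ≤ t * 2 := mul_le_mul_of_nonneg_left hW2 ht_nonneg
    linarith
  -- the difference vector
  have hvec : X.submatrix id Sum.inl *ᵥ α - Y *ᵥ w
      = X *ᵥ (Sum.elim (fun _ : Fin (k+1) => (0:ℝ)) (fun b => -((Cl *ᵥ w) b))) := by
    have h1 : X.submatrix id Sum.inl *ᵥ α = X *ᵥ (Sum.elim α (fun _ : Fin (m+1) => (0:ℝ))) := by
      funext i
      simp [Matrix.mulVec, dotProduct, Fintype.sum_sum_type, Matrix.submatrix_apply]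
    have h2 : Y *ᵥ w = X *ᵥ (C *ᵥ w) := by rw [hYC, Matrix.mulVec_mulVec]
    have h5 : (Sum.elim α (fun _ : Fin (m+1) => (0:ℝ))) - C *ᵥ w
        = Sum.elim (fun _ : Fin (k+1) => (0:ℝ)) (fun b => -((Cl *ᵥ w) b)) := by
      funext i
      cases i with
      | inl a =>
        have hca : (C *ᵥ w) (Sum.inl a) = (Ch *ᵥ w) a := rfl
        simp only [Pi.sub_apply, Sum.elim_inl, hca, hw]
        simp
      | inr b =>
        have hcb : (C *ᵥ w) (Sum.inr b) = (Cl *ᵥ w) b := rfl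
        simp only [Pi.sub_apply, Sum.elim_inr, hcb]
        ring
    rw [h1, h2, ← Matrix.mulVec_sub, h5]
  -- value of the quadratic form
  have hval : (X *ᵥ Sum.elim (fun _ : Fin (k+1) => (0:ℝ)) (fun b => -((Cl *ᵥ w) b))) ⬝ᵥ
        A *ᵥ (X *ᵥ Sum.elim (fun _ : Fin (k+1) => (0:ℝ)) (fun b => -((Cl *ᵥ w) b)))
      = ∑ b, lam (Sum.inr b) * ((Cl *ᵥ w) b)^2 := by
    set u : (Fin (k+1) ⊕ Fin (m+1)) → ℝ :=
      Sum.elim (fun _ : Fin (k+1) => (0:ℝ)) (fun b => -((Cl *ᵥ w) b)) with hu_def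
    have h2 : (X *ᵥ u) ᵥ* (A * X) = Matrix.diagonal lam *ᵥ u := by
      rw [show A * X = ((A * X)ᵀ)ᵀ from (transpose_transpose _).symm,
        Matrix.vecMul_transpose, Matrix.transpose_mul, hAsym, Matrix.mulVec_mulVec, hXA]
    rw [Matrix.mulVec_mulVec, Matrix.dotProduct_mulVec, h2]
    have h3 : (Matrix.diagonal lam *ᵥ u) ⬝ᵥ u = ∑ i, lam i * u i * u i := by
      simp [dotProduct, Matrix.mulVec_diagonal, mul_assoc]
    rw [h3, Fintype.sum_sum_type]
    have h4 : ∀ a : Fin (k+1), lam (Sum.inl a) * u (Sum.inl a) * u (Sum.inl a) = 0 := by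
      intro a; simp [hu_def]
    rw [Finset.sum_congr rfl (fun a _ => h4 a)]
    simp only [Finset.sum_const_zero, zero_add]
    apply Finset.sum_congr rfl
    intro b _
    have : u (Sum.inr b) = -((Cl *ᵥ w) b) := rfl
    rw [this]; ring
  -- final estimate on the quadratic form
  have hV : ∑ b, lam (Sum.inr b) * ((Cl *ᵥ w) b)^2
      ≤ 2 * ll * (((k:ℝ) + 1) * (energy A B (X.submatrix id Sum.inl) - energy A B Y))
        / (lk - ll) := by
    have hstep1 : ∑ b, lam (Sum.inr b) * ((Cl *ᵥ w) b)^2 ≤ ll * ∑ b, ((Cl *ᵥ w) b)^2 := by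
      rw [Finset.mul_sum]
      apply Finset.sum_le_sum
      intro b _
      exact mul_le_mul_of_nonneg_right (hmono_l 0 b (Fin.zero_le b)) (sq_nonneg _)
    have hll_pos : 0 < ll := hpos _
    have hstep2 : ll * ∑ b, ((Cl *ᵥ w) b)^2 ≤ ll * (2 * t) :=
      mul_le_mul_of_nonneg_left hL2 hll_pos.le
    have hstep3 : ll * (2 * t) ≤ ll * (2 * (N / (lk - ll))) := by
      apply mul_le_mul_of_nonneg_left _ hll_pos.le
      linarith
    have hNval : ((k:ℝ) + 1) * (energy A B (X.submatrix id Sum.inl) - energy A B Y) = N := by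
      rw [hDE, mul_div_cancel₀ _ (ne_of_gt hk1)]
    rw [hNval]
    calc ∑ b, lam (Sum.inr b) * ((Cl *ᵥ w) b)^2 ≤ ll * (2 * (N / (lk - ll))) := by
          linarith
      _ = 2 * ll * N / (lk - ll) := by ring
  -- put everything together
  refine le_trans (ciInf_le ?_ w) ?_
  · exact ⟨0, by rintro x ⟨β, rfl⟩; exact Real.sqrt_nonneg _⟩
  · rw [hvec, hval]
    exact Real.sqrt_le_sqrt hV
end

section
/- (Theorem 4.6, abstract Hilbert space version) Let H₁, H₂ be real Hilbert spaces and P : H₁ → H₂ a bounded linear map. Let (ψᵢ)_{i≥1} be an orthonormal family in H₁ such that (Pψᵢ) are pairwise orthogonal in H₂ with ‖Pψᵢ‖² = λᵢ, where λ₁ ≥ λ₂ ≥ … ≥ 0. Let u = Σ_{i≥1} uᵢψᵢ with Σ uᵢ² ≤ 1, and let Γₙ be a subspace of H₂ such that for every v in Ψₙ := span{ψ₁,…,ψₙ} with ‖v‖_{H₁} ≤ 1 there exists γ ∈ Γₙ with ‖Pv − γ‖_{H₂} ≤ D. Then inf over γ ∈ Γₙ of ‖Pu − γ‖_{H₂}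 ≤ √λ_{n+1} + D. -/
open Finset

lemma orth_norm_sum {H : Type*} [NormedAddCommGroup H] [InnerProductSpace ℝ H]
    (x : ℕ → H) (hx : ∀ i j, i ≠ j → inner ℝ (x i) (x j) = (0:ℝ))
    (a : ℕ → ℝ) (s : Finset ℕ) :
    ‖∑ i ∈ s, a i • x i‖ ^ 2 = ∑ i ∈ s, a i ^ 2 * ‖x i‖ ^ 2 := by
  rw [← real_inner_self_eq_norm_sq, sum_inner]
  apply Finset.sum_congr rfl
  intro i hi
  rw [inner_sum, Finset.sum_eq_single i]
  · rw [real_inner_smul_left, real_inner_smul_right, real_inner_self_eq_norm_sq]; ring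
  · intro j hj hne
    rw [real_inner_smul_left, real_inner_smul_right, hx i j (Ne.symm hne)]; ring
  · intro h; exact absurd hi h

/-- Theorem 4.6 (abstract Hilbert space version).  Let `P : H₁ → H₂` be a
bounded linear map between real Hilbert spaces, `(ψ i)` an orthonormal family
in `H₁` with `(P ψ i)` pairwise orthogonal in `H₂` and `‖P ψ i‖² = λ i`, the
`λ i` nonincreasing and nonnegative.  If `u = Σ c i • ψ i` with `Σ c i ² ≤ 1`,
and `Γ` is a subspace of `H₂` such that every `v` in `span {ψ 0, …, ψ (n-1)}`
with `‖v‖ ≤ 1` admits `γ ∈ Γ` with `‖P v − γ‖ ≤ D`, then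
`inf_{γ ∈ Γ} ‖P u − γ‖ ≤ √(λ n) + D`.  (Indices are shifted: the paper's
`ψ₁, ψ₂, …` is `ψ 0, ψ 1, …`, so the paper's `λ_{n+1}` is `lam n`.) -/
theorem stmt_16
    {H₁ H₂ : Type*}
    [NormedAddCommGroup H₁] [InnerProductSpace ℝ H₁] [CompleteSpace H₁]
    [NormedAddCommGroup H₂] [InnerProductSpace ℝ H₂] [CompleteSpace H₂]
    (P : H₁ →L[ℝ] H₂)
    (ψ : ℕ → H₁) (hψ : Orthonormal ℝ ψ)
    (lam : ℕ → ℝ) (hlam_mono : Antitone lam) (hlam_nonneg : ∀ i, 0 ≤ lam i)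
    (hPnorm : ∀ i, ‖P (ψ i)‖ ^ 2 = lam i)
    (hPorth : ∀ i j, i ≠ j → inner ℝ (P (ψ i)) (P (ψ j)) = (0 : ℝ))
    (c : ℕ → ℝ) (u : H₁)
    (hu : HasSum (fun i => c i • ψ i) u)
    (hc_summable : Summable (fun i => c i ^ 2))
    (hc : ∑' i, c i ^ 2 ≤ 1)
    (n : ℕ) (Γ : Submodule ℝ H₂) (D : ℝ) (hD : 0 ≤ D)
    (happrox : ∀ v ∈ Submodule.span ℝ (Set.range fun i : Fin n => ψ i),
        ‖v‖ ≤ 1 → ∃ γ ∈ Γ, ‖P v - γ‖ ≤ D) :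
    ⨅ γ : Γ, ‖P u - (γ : H₂)‖ ≤ Real.sqrt (lam n) + D := by
  classical
  set v : H₁ := ∑ i ∈ Finset.range n, c i • ψ i with hv
  -- any finite sum of c i ^ 2 is ≤ 1
  have hsum_le : ∀ s : Finset ℕ, ∑ i ∈ s, c i ^ 2 ≤ 1 := fun s =>
    le_trans (Summable.sum_le_tsum s (fun i _ => sq_nonneg _) hc_summable) hc
  -- ‖v‖ ≤ 1
  have hψorth : ∀ i j, i ≠ j → inner ℝ (ψ i) (ψ j) = (0:ℝ) := fun i j h => hψ.2 h
  have hvnorm2 : ‖v‖ ^ 2 = ∑ i ∈ Finset.range n, c i ^ 2 := by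
    rw [hv, orth_norm_sum ψ hψorth c]
    exact Finset.sum_congr rfl fun i _ => by rw [hψ.1 i]; ring
  have hvle : ‖v‖ ≤ 1 := by
    nlinarith [norm_nonneg v, hsum_le (Finset.range n), hvnorm2]
  have hvmem : v ∈ Submodule.span ℝ (Set.range fun i : Fin n => ψ i) := by
    apply Submodule.sum_mem
    intro i hi
    exact Submodule.smul_mem _ _
      (Submodule.subset_span ⟨⟨i, Finset.mem_range.mp hi⟩, rfl⟩)
  obtain ⟨γ, hγΓ, hγ⟩ := happrox v hvmem hvle
  -- the tail sum
  have htail : HasSum (fun i => c (i + n) • ψ (i + n)) (u - v) :=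
    (hasSum_nat_add_iff (f := fun i => c i • ψ i) n).mpr
      (by simpa [hv, sub_add_cancel] using hu)
  have hPtail : HasSum (fun i => c (i + n) • P (ψ (i + n))) (P u - P v) := by
    have := P.hasSum htail
    simpa using this
  -- bound partial sums of the tail
  have hbound : ∀ s : Finset ℕ,
      ‖∑ i ∈ s, c (i + n) • P (ψ (i + n))‖ ≤ Real.sqrt (lam n) := by
    intro s
    have h1 : ‖∑ i ∈ s, c (i + n) • P (ψ (i + n))‖ ^ 2
        = ∑ i ∈ s, c (i + n) ^ 2 * lam (i + n) := by
      rw [orth_norm_sum (fun i => P (ψ (i + n)))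
        (fun i j h => hPorth (i + n) (j + n) (by omega)) (fun i => c (i + n)) s]
      exact Finset.sum_congr rfl fun i _ => by rw [hPnorm]
    have h2 : ∑ i ∈ s, c (i + n) ^ 2 * lam (i + n) ≤ lam n * ∑ i ∈ s, c (i + n) ^ 2 := by
      rw [Finset.mul_sum]
      apply Finset.sum_le_sum
      intro i _
      rw [mul_comm (lam n)]
      exact mul_le_mul_of_nonneg_left (hlam_mono (Nat.le_add_left n i)) (sq_nonneg _)
    have h3 : ∑ i ∈ s, c (i + n) ^ 2 ≤ 1 := by
      have := hsum_le (s.map ⟨fun i => i + n, add_left_injective n⟩)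
      rwa [Finset.sum_map] at this
    have h4 : ‖∑ i ∈ s, c (i + n) • P (ψ (i + n))‖ ^ 2 ≤ lam n := by
      calc _ = ∑ i ∈ s, c (i + n) ^ 2 * lam (i + n) := h1
        _ ≤ lam n * ∑ i ∈ s, c (i + n) ^ 2 := h2
        _ ≤ lam n * 1 := mul_le_mul_of_nonneg_left h3 (hlam_nonneg n)
        _ = lam n := mul_one _
    have := Real.sqrt_le_sqrt h4
    rwa [Real.sqrt_sq (norm_nonneg _)] at this
  have htailnorm : ‖P u - P v‖ ≤ Real.sqrt (lam n) :=
    le_of_tendsto' (Filter.Tendsto.norm hPtail) hbound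
  -- conclude
  have hne : (⨅ γ : Γ, ‖P u - (γ : H₂)‖) ≤ ‖P u - γ‖ :=
    ciInf_le_of_le ⟨0, by rintro x ⟨g, rfl⟩; exact norm_nonneg _⟩
      (⟨γ, hγΓ⟩ : Γ) le_rfl
  calc (⨅ γ : Γ, ‖P u - (γ : H₂)‖) ≤ ‖P u - γ‖ := hne
    _ ≤ ‖P u - P v‖ + ‖P v - γ‖ := norm_sub_le_norm_sub_add_norm_sub _ _ _
    _ ≤ Real.sqrt (lam n) + D := add_le_add htailnorm hγ
end
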